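/- arXiv:0909.1112 — 5 statements merged into one kernel-verified Lean document; each statement's English description precedes it below -/
import Mathlib

section
/- For words u, v in x₁,…,xₙ with χ(u) = x^α and χ(v) = x^β, the constant term of d_{v⃖}·ψ(x^α) equals α!·δ_{α,β}, where ψ(x^α) = Σ_{π ∈ S_k} u∘π is the sum over all rearrangements of the letters of u, and α! = α₁!⋯αₙ!. -/
open scoped BigOperators


-- Lemma C: fiber count
lemma card_get_eq_count {α : Type*} [DecidableEq α] (l : List α) (a : α) :
    Fintype.card {j : Fin l.length // l.get j = a} = l.count a := by
  rw [Fintype.card_subtype, Finset.card_filter]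
  induction l with
  | nil => simp
  | cons b t ih =>
    show (∑ i : Fin (t.length + 1), if (b :: t).get i = a then 1 else 0) = _
    rw [Fin.sum_univ_succ, List.count_cons]
    have hs : ∀ i : Fin t.length, (b :: t).get i.succ = t.get i := fun i => rfl
    simp only [hs]
    rw [ih, add_comm]
    congr 1
    simp
    split_ifs with hba <;> simp [hba]

-- Lemma B: stabilizer equiv
def stabEquiv {k : ℕ} {β : Type*} (g : Fin k → β) :
    {π : Equiv.Perm (Fin k) // g ∘ π = g} ≃ Π i : β, Equiv.Perm {j : Fin k // g j = i} where
  toFun := fun ⟨π, hπ⟩ i => π.subtypePerm (fun j => by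
    have := congrFun hπ j
    simp only [Function.comp_apply] at this
    constructor <;> intro h <;> simp_all)
  invFun F := ⟨Equiv.permCongr (Equiv.sigmaFiberEquiv g) (Equiv.sigmaCongrRight F), by
    funext x
    simp only [Function.comp_apply, Equiv.permCongr_apply]
    have h1 : (Equiv.sigmaFiberEquiv g).symm x = ⟨g x, ⟨x, rfl⟩⟩ := rfl
    rw [h1]
    exact (F (g x) ⟨x, rfl⟩).2⟩
  left_inv := fun ⟨π, hπ⟩ => by
    ext x
    simp only [Equiv.permCongr_apply]
    rfl
  right_inv := fun F => by
    funext i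
    ext ⟨j, hj⟩
    subst hj
    simp only [Equiv.Perm.subtypePerm_apply, Equiv.permCongr_apply]
    rfl

lemma exists_perm_comp {k : ℕ} {α : Type*} [LinearOrder α] (f g : Fin k → α)
    (h : List.Perm (List.ofFn f) (List.ofFn g)) : ∃ σ : Equiv.Perm (Fin k), f ∘ σ = g := by
  have h1 : List.ofFn (f ∘ Tuple.sort f) = List.ofFn (g ∘ Tuple.sort g) :=
    List.Perm.eq_of_sortedLE
      (Tuple.monotone_sort f).sortedLE_ofFn (Tuple.monotone_sort g).sortedLE_ofFn
      (((Tuple.sort f).ofFn_comp_perm f).trans (h.trans ((Tuple.sort g).ofFn_comp_perm g).symm))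
  have h2 : f ∘ Tuple.sort f = g ∘ Tuple.sort g := List.ofFn_injective h1
  refine ⟨(Tuple.sort f) * (Tuple.sort g)⁻¹, funext fun x => ?_⟩
  have := congrFun h2 ((Tuple.sort g)⁻¹ x)
  simpa using this

lemma card_rearrange {n : ℕ} (u v : List (Fin n)) (h : (u : Multiset (Fin n)) = v) :
    Fintype.card {π : Equiv.Perm (Fin u.length) // List.ofFn (fun i => u.get (π i)) = v}
      = ∏ i : Fin n, (u.count i).factorial := by
  have hp : List.Perm u v := Multiset.coe_eq_coe.mp h
  have hl : u.length = v.length := hp.length_eq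
  set g : Fin u.length → Fin n := fun i => v.get (Fin.cast hl i) with hgdef
  have hg : List.ofFn g = v := by
    apply List.ext_getElem (by simp [hl])
    intro i h1 h2
    simp [hgdef]
  have hupg : List.Perm (List.ofFn u.get) (List.ofFn g) := by
    rw [List.ofFn_get, hg]; exact hp
  obtain ⟨σ₀, hσ₀⟩ := exists_perm_comp u.get g hupg
  have e1 : {π : Equiv.Perm (Fin u.length) // List.ofFn (fun i => u.get (π i)) = v}
      ≃ {π : Equiv.Perm (Fin u.length) // u.get ∘ π = g} :=
    Equiv.subtypeEquiv (Equiv.refl _) (fun π => by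
      rw [← hg]
      exact List.ofFn_inj.trans Iff.rfl)
  have e2 : {τ : Equiv.Perm (Fin u.length) // g ∘ τ = g}
      ≃ {π : Equiv.Perm (Fin u.length) // u.get ∘ π = g} :=
    Equiv.subtypeEquiv (Equiv.mulLeft σ₀) (fun τ => by
      have : u.get ∘ ⇑(σ₀ * τ) = g ∘ ⇑τ := by
        funext x
        exact congrFun hσ₀ (τ x)
      rw [Equiv.coe_mulLeft, this])
  rw [Fintype.card_congr (e1.trans (e2.symm.trans (stabEquiv g))), Fintype.card_pi]
  refine Finset.prod_congr rfl fun i _ => ?_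
  rw [Fintype.card_perm]
  congr 1
  have e3 : {j : Fin u.length // g j = i} ≃ {j : Fin v.length // v.get j = i} :=
    Equiv.subtypeEquiv (finCongr hl) (fun j => Iff.rfl)
  rw [Fintype.card_congr e3, card_get_eq_count, hp.count_eq]

/-- The free associative algebra `ℂ⟨x₁,…,xₙ⟩`, with monomial basis the words. -/
abbrev NCPoly (n : ℕ) := MonoidAlgebra ℂ (FreeMonoid (Fin n))

/-- Deletion of the prefix `u`: the operator `d_{u⃖}`. -/
noncomputable def Dop {n : ℕ} (u : FreeMonoid (Fin n)) (f : NCPoly n) : NCPoly n :=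
  MonoidAlgebra.ofCoeff
    (Finsupp.comapDomain (fun w => u * w) f.coeff (fun _ _ _ _ h => mul_left_cancel h))

/-- The word pairing `⟨f,P⟩ = Σ_w f_w P_w`. -/
noncomputable def wpair {n : ℕ} (f P : NCPoly n) : ℂ :=
  f.coeff.sum fun w c => c * P.coeff w

/-- `f` is homogeneous (all words in its support have the same length). -/
def IsHomog {n : ℕ} (f : NCPoly n) : Prop :=
  ∃ d : ℕ, ∀ w ∈ f.coeff.support, FreeMonoid.length w = d

/-- A two-sided ideal is homogeneous if it contains every homogeneous component
of each of its elements. -/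
def IsHomogIdeal {n : ℕ} (I : TwoSidedIdeal (NCPoly n)) : Prop :=
  ∀ f ∈ I, ∀ d : ℕ,
    MonoidAlgebra.ofCoeff
      (f.coeff.filter fun w : FreeMonoid (Fin n) => FreeMonoid.length w = d) ∈ I

/-- `ψ(x^α) = Σ_{π∈S_k} u∘π` : the sum over all position-permutations of the word `u`. -/
noncomputable def sympWord {n : ℕ} (u : List (Fin n)) : NCPoly n :=
  ∑ π : Equiv.Perm (Fin u.length),
    MonoidAlgebra.single (FreeMonoid.ofList (List.ofFn fun i => u.get (π i))) (1 : ℂ)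

/-- For words `u, v` with `χ(u) = x^α` and `χ(v) = x^β`,
`[d_{v⃖}·ψ(x^α)]_{c.t.} = α!·δ_{α,β}` ; here `α = β` iff `u` and `v` have the same
letter multiset, and `α! = ∏ᵢ (count of xᵢ in u)!`. -/
theorem ct_deriv_sympWord {n : ℕ} (u v : List (Fin n)) :
    (Dop (FreeMonoid.ofList v) (sympWord u)).coeff (1 : FreeMonoid (Fin n)) =
      if (u : Multiset (Fin n)) = (v : Multiset (Fin n))
      then ((∏ i : Fin n, Nat.factorial (u.count i) : ℕ) : ℂ)
      else 0 := by
  classical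
  rw [Dop, MonoidAlgebra.coeff_ofCoeff]
  change (sympWord u).coeff (FreeMonoid.ofList v * 1) = _
  rw [mul_one, sympWord]
  rw [MonoidAlgebra.coeff_sum, Finsupp.finset_sum_apply]
  have hstep : ∀ π : Equiv.Perm (Fin u.length),
      (MonoidAlgebra.single (FreeMonoid.ofList (List.ofFn fun i => u.get (π i))) (1 : ℂ)).coeff
        (FreeMonoid.ofList v)
      = if List.ofFn (fun i => u.get (π i)) = v then 1 else 0 := by
    intro π
    rw [MonoidAlgebra.coeff_single, Finsupp.single_apply]
    by_cases hc : List.ofFn (fun i => u.get (π i)) = v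
    · rw [if_pos (by rw [hc]), if_pos hc]
    · rw [if_neg (fun hcc => hc (FreeMonoid.ofList.injective hcc)), if_neg hc]
  simp only [hstep]
  rw [Finset.sum_boole]
  rw [← Fintype.card_subtype]
  by_cases h : (u : Multiset (Fin n)) = (v : Multiset (Fin n))
  · rw [if_pos h, card_rearrange u v h]
  · rw [if_neg h]
    norm_cast
    rw [Fintype.card_eq_zero_iff]
    constructor
    rintro ⟨π, hπ⟩
    apply h
    apply Multiset.coe_eq_coe.mpr
    have h2 : List.Perm u (List.ofFn fun i => u.get (π i)) := by
      have := (π.ofFn_comp_perm u.get).symm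
      rwa [List.ofFn_get] at this
    exact h2.trans (hπ ▸ List.Perm.refl _)
end

section
/- For any P ∈ ℂ[x₁,…,xₙ] and any f ∈ ℂ⟨x₁,…,xₙ⟩, the constant term of f⃖(d)·ψ(P) equals the constant term of χ(f)(∂)·P, where χ(f)(∂) is the differential operator obtained from the commutative polynomial χ(f) by substituting x_i ↦ ∂/∂x_i. -/
open scoped BigOperators

/-- The abelianization map `χ : ℂ⟨x₁,…,xₙ⟩ → ℂ[x₁,…,xₙ]`. -/
noncomputable def chiMap (n : ℕ) : NCPoly n →ₐ[ℂ] MvPolynomial (Fin n) ℂ :=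
  MonoidAlgebra.lift ℂ (MvPolynomial (Fin n) ℂ) (FreeMonoid (Fin n))
    (FreeMonoid.lift fun i => MvPolynomial.X i)

/-- A canonical word with abelianization `x^α`. -/
def wordOf {n : ℕ} (α : Fin n →₀ ℕ) : List (Fin n) :=
  (List.finRange n).flatMap fun i => List.replicate (α i) i

/-- The linear injection `ψ : ℂ[x₁,…,xₙ] → ℂ⟨x₁,…,xₙ⟩`. -/
noncomputable def psiMap {n : ℕ} (P : MvPolynomial (Fin n) ℂ) : NCPoly n :=
  (AddMonoidAlgebra.coeff P).sum fun α c => c • sympWord (wordOf α)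

/-- The operator `f⃖(d)` applied to `P`. -/
noncomputable def fdApply {n : ℕ} (f P : NCPoly n) : NCPoly n :=
  f.coeff.sum fun w c => c • Dop w P

/-- The iterated partial derivative `∂^β`. -/
noncomputable def pdOp {n : ℕ} (β : Fin n →₀ ℕ) (P : MvPolynomial (Fin n) ℂ) :
    MvPolynomial (Fin n) ℂ :=
  (List.finRange n).foldl (fun Q i => (fun Q' => MvPolynomial.pderiv i Q')^[β i] Q) P

/-- The differential operator `Q(∂)` applied to `P`. -/
noncomputable def diffOp {n : ℕ} (Q P : MvPolynomial (Fin n) ℂ) : MvPolynomial (Fin n) ℂ :=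
  (AddMonoidAlgebra.coeff Q).sum fun β c => c • pdOp β P

open MvPolynomial

variable {n : ℕ}


noncomputable def degOf (l : List (Fin n)) : Fin n →₀ ℕ :=
  (l.map fun i => Finsupp.single i 1).sum

lemma degOf_nil : degOf ([] : List (Fin n)) = 0 := rfl

lemma degOf_cons (a : Fin n) (l : List (Fin n)) :
    degOf (a :: l) = Finsupp.single a 1 + degOf l := by
  simp [degOf]

lemma degOf_append (l₁ l₂ : List (Fin n)) :
    degOf (l₁ ++ l₂) = degOf l₁ + degOf l₂ := by
  simp [degOf]

lemma degOf_replicate (m : ℕ) (i : Fin n) :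
    degOf (List.replicate m i) = Finsupp.single i m := by
  induction m with
  | zero => simp [degOf]
  | succ m ih =>
    rw [List.replicate_succ, degOf_cons, ih, ← Finsupp.single_add, add_comm]

lemma degOf_wordOf (α : Fin n →₀ ℕ) : degOf (wordOf α) = α := by
  have h : ∀ L : List (Fin n),
      degOf (L.flatMap fun i => List.replicate (α i) i)
        = (L.map fun i => Finsupp.single i (α i)).sum := by
    intro L
    induction L with
    | nil => simp [degOf]
    | cons a L ih => rw [List.flatMap_cons, degOf_append, ih, degOf_replicate, List.map_cons,
        List.sum_cons]
  rw [wordOf, h, ← Fin.sum_univ_def, Finsupp.univ_sum_single]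

lemma sum_degOf (l : List (Fin n)) : (degOf l).sum (fun _ m => m) = l.length := by
  induction l with
  | nil => simp [degOf]
  | cons a l ih =>
    rw [degOf_cons, Finsupp.sum_add_index (by simp) (by intros; rfl),
      Finsupp.sum_single_index rfl, ih, List.length_cons, add_comm]

lemma card_fiber_get (l : List (Fin n)) (j : Fin n) :
    Fintype.card {x : Fin l.length // l.get x = j} = degOf l j := by
  induction l with
  | nil => simp [degOf]
  | cons a l ih =>
    rw [Fintype.card_subtype, Finset.card_filter]
    show (∑ i : Fin (l.length + 1), if (a :: l).get i = j then 1 else 0) = _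
    rw [Fin.sum_univ_succ, degOf_cons,
      Finsupp.add_apply, Finsupp.single_apply]
    simp only [List.get_cons_zero]
    rw [← Finset.card_filter, ← Fintype.card_subtype]
    congr 1

noncomputable def permFiberEquiv {k : ℕ} (g h : Fin k → Fin n) :
    {π : Equiv.Perm (Fin k) // ∀ x, g (π x) = h x} ≃
      ∀ j : Fin n, ({x : Fin k // h x = j} ≃ {x : Fin k // g x = j}) where
  toFun := fun ⟨π, hπ⟩ j => π.subtypeEquiv fun a => by rw [hπ a]
  invFun := fun F => ⟨Equiv.ofFiberEquiv F, fun x => Equiv.ofFiberEquiv_map F x⟩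
  left_inv := by
    rintro ⟨π, hπ⟩
    apply Subtype.ext
    apply Equiv.ext
    intro x
    simp [Equiv.ofFiberEquiv_apply, Equiv.subtypeEquiv]
    rfl
  right_inv := by
    intro F
    funext j
    apply Equiv.ext
    rintro ⟨x, rfl⟩
    apply Subtype.ext
    simp [Equiv.ofFiberEquiv_apply, Equiv.subtypeEquiv, Equiv.sigmaFiberEquiv]
    rfl

lemma card_equiv_ite (A B : Type) [Fintype A] [Fintype B] [DecidableEq A] [DecidableEq B] :
    Fintype.card (A ≃ B)
      = if Fintype.card A = Fintype.card B then (Fintype.card A).factorial else 0 := by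
  by_cases hc : Fintype.card A = Fintype.card B
  · rw [if_pos hc, Fintype.card_equiv (Fintype.equivOfCardEq hc)]
  · rw [if_neg hc, Fintype.card_eq_zero_iff]
    exact ⟨fun e => hc (Fintype.card_congr e)⟩

lemma card_perm_eq_prod {k : ℕ} (g h : Fin k → Fin n) :
    Fintype.card {π : Equiv.Perm (Fin k) // ∀ x, g (π x) = h x}
      = ∏ j : Fin n, Fintype.card ({x : Fin k // h x = j} ≃ {x : Fin k // g x = j}) := by
  rw [Fintype.card_congr (permFiberEquiv g h), Fintype.card_pi]


lemma sympWord_apply (u : List (Fin n)) (w : FreeMonoid (Fin n)) :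
    (sympWord u).coeff w = if degOf (FreeMonoid.toList w) = degOf u
      then ((∏ j, ((degOf u) j).factorial : ℕ) : ℂ) else 0 := by
  classical
  have hiff : ∀ v : List (Fin n), (FreeMonoid.ofList v = w) ↔ (v = FreeMonoid.toList w) :=
    fun v => ⟨fun hh => by rw [← hh, FreeMonoid.toList_ofList],
      fun hh => by rw [hh, FreeMonoid.ofList_toList]⟩
  have hcard : (sympWord u).coeff w =
      ((Fintype.card {π : Equiv.Perm (Fin u.length) //
        (List.ofFn fun i => u.get (π i)) = FreeMonoid.toList w} : ℕ) : ℂ) := by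
    rw [sympWord, MonoidAlgebra.coeff_sum, Finsupp.finset_sum_apply, Fintype.card_subtype, ← Finset.sum_boole]
    apply Finset.sum_congr rfl
    intro π _
    rw [MonoidAlgebra.coeff_single, Finsupp.single_apply]
    simp only [hiff]
  by_cases hl : u.length = (FreeMonoid.toList w).length
  · have hdeg_h : ∀ j, Fintype.card {x : Fin u.length //
        (FreeMonoid.toList w).get (Fin.cast hl x) = j} = degOf (FreeMonoid.toList w) j := by
      intro j
      rw [← card_fiber_get]
      exact Fintype.card_congr ((finCongr hl).subtypeEquiv fun x => Iff.rfl)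
    have hofn : FreeMonoid.toList w
        = List.ofFn (fun x : Fin u.length => (FreeMonoid.toList w).get (Fin.cast hl x)) := by
      apply List.ext_get (by simp [← hl])
      intro i h1 h2
      simp [List.get_ofFn]
    have hcond : ∀ π : Equiv.Perm (Fin u.length),
        ((List.ofFn fun i => u.get (π i)) = FreeMonoid.toList w)
          ↔ ∀ x, u.get (π x) = (FreeMonoid.toList w).get (Fin.cast hl x) := by
      intro π
      conv_lhs => rw [hofn]
      rw [List.ofFn_inj, _root_.funext_iff]
    rw [hcard, Fintype.card_congr (Equiv.subtypeEquivRight hcond), card_perm_eq_prod]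
    have hfac : ∀ j : Fin n,
        Fintype.card ({x : Fin u.length // (FreeMonoid.toList w).get (Fin.cast hl x) = j}
            ≃ {x : Fin u.length // u.get x = j})
          = if degOf (FreeMonoid.toList w) j = degOf u j
            then (degOf (FreeMonoid.toList w) j).factorial else 0 := by
      intro j
      rw [card_equiv_ite, hdeg_h, card_fiber_get]
    by_cases hdeg : degOf (FreeMonoid.toList w) = degOf u
    · rw [if_pos hdeg]
      rw [Finset.prod_congr rfl fun j _ => hfac j]
      simp only [hdeg]
      simp
    · rw [if_neg hdeg]
      have : ∃ j, degOf (FreeMonoid.toList w) j ≠ degOf u j := by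
        by_contra hc
        push_neg at hc
        exact hdeg (Finsupp.ext hc)
      obtain ⟨j, hj⟩ := this
      have hz : (∏ j : Fin n, if (degOf (FreeMonoid.toList w)) j = (degOf u) j
          then ((degOf (FreeMonoid.toList w)) j).factorial else 0) = 0 :=
        Finset.prod_eq_zero (Finset.mem_univ j) (if_neg hj)
      rw [Finset.prod_congr rfl fun j _ => hfac j, hz]
      simp
  · have hempty : Fintype.card {π : Equiv.Perm (Fin u.length) //
        (List.ofFn fun i => u.get (π i)) = FreeMonoid.toList w} = 0 := by
      rw [Fintype.card_eq_zero_iff]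
      refine ⟨fun ⟨π, hπ⟩ => hl ?_⟩
      rw [← hπ]
      simp
    have : degOf (FreeMonoid.toList w) ≠ degOf u := by
      intro hc
      apply hl
      rw [← sum_degOf u, ← sum_degOf (FreeMonoid.toList w), hc]
    rw [hcard, hempty, if_neg this]
    simp

lemma iter_pderiv_monomial (i : Fin n) (m : ℕ) (α : Fin n →₀ ℕ) (c : ℂ) :
    (fun Q' => pderiv i Q')^[m] (monomial α c)
      = monomial (α - Finsupp.single i m) ((((α i).descFactorial m : ℕ) : ℂ) * c) := by
  induction m with
  | zero => simp
  | succ m ih =>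
    rw [Function.iterate_succ_apply', ih, pderiv_monomial]
    have he : α - Finsupp.single i m - Finsupp.single i 1 = α - Finsupp.single i (m + 1) := by
      rw [tsub_tsub, ← Finsupp.single_add]
    have hc : ((α - Finsupp.single i m) i) = α i - m := by
      rw [Finsupp.tsub_apply, Finsupp.single_eq_same]
    rw [he, hc, Nat.descFactorial_succ]
    push_cast
    ring_nf

lemma foldl_pd_monomial (β : Fin n →₀ ℕ) (L : List (Fin n)) (hL : L.Nodup)
    (α : Fin n →₀ ℕ) (c : ℂ) :
    L.foldl (fun Q i => (fun Q' => pderiv i Q')^[β i] Q) (monomial α c)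
      = monomial (α - (L.map fun i => Finsupp.single i (β i)).sum)
          ((((L.map fun i => (α i).descFactorial (β i)).prod : ℕ) : ℂ) * c) := by
  induction L generalizing α c with
  | nil => simp
  | cons a L ih =>
    obtain ⟨ha, hL'⟩ := List.nodup_cons.mp hL
    rw [List.foldl_cons]
    show L.foldl _ ((fun Q' => pderiv a Q')^[β a] (monomial α c)) = _
    rw [iter_pderiv_monomial, ih hL']
    have hmap : (L.map fun i => ((α - Finsupp.single a (β a)) i).descFactorial (β i))
        = L.map fun i => (α i).descFactorial (β i) := by
      apply List.map_congr_left
      intro i hi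
      have hne : a ≠ i := fun hh => ha (hh ▸ hi)
      rw [Finsupp.tsub_apply, Finsupp.single_apply, if_neg hne, Nat.sub_zero]
    rw [hmap, tsub_tsub, List.map_cons, List.sum_cons, List.map_cons, List.prod_cons]
    congr 1
    push_cast
    ring

lemma pdOp_monomial (β α : Fin n →₀ ℕ) (c : ℂ) :
    pdOp β (monomial α c)
      = monomial (α - β) ((((∏ i, (α i).descFactorial (β i)) : ℕ) : ℂ) * c) := by
  rw [pdOp, foldl_pd_monomial β _ (List.nodup_finRange n)]
  have h1 : ((List.finRange n).map fun i => Finsupp.single i (β i)).sum = β := by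
    rw [← Fin.sum_univ_def, Finsupp.univ_sum_single]
  have h2 : ((List.finRange n).map fun i => (α i).descFactorial (β i)).prod
      = ∏ i, (α i).descFactorial (β i) := by
    rw [Fin.prod_univ_def]
  rw [h1, h2]

lemma constantCoeff_pdOp_monomial (β α : Fin n →₀ ℕ) (c : ℂ) :
    constantCoeff (pdOp β (monomial α c))
      = if β = α then (((∏ i, (α i).factorial) : ℕ) : ℂ) * c else 0 := by
  classical
  rw [pdOp_monomial, constantCoeff_monomial]
  by_cases h : β = α
  · subst h
    rw [if_pos (tsub_self β), if_pos rfl]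
    simp [Nat.descFactorial_self]
  · rw [if_neg h]
    by_cases h2 : α - β = 0
    · rw [if_pos h2]
      have hle : α ≤ β := tsub_eq_zero_iff_le.mp h2
      have hex : ∃ i, α i < β i := by
        by_contra hc
        push_neg at hc
        exact h (Finsupp.ext fun i => le_antisymm (hc i) (Finsupp.le_def.mp hle i))
      obtain ⟨i, hi⟩ := hex
      rw [Finset.prod_eq_zero (Finset.mem_univ i)
        (Nat.descFactorial_eq_zero_iff_lt.mpr hi)]
      simp
    · rw [if_neg h2]

lemma iter_pderiv_add (i : Fin n) (m : ℕ) (P Q : MvPolynomial (Fin n) ℂ) :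
    (fun Q' => pderiv i Q')^[m] (P + Q)
      = (fun Q' => pderiv i Q')^[m] P + (fun Q' => pderiv i Q')^[m] Q := by
  induction m generalizing P Q with
  | zero => rfl
  | succ m ih =>
    rw [Function.iterate_succ_apply, Function.iterate_succ_apply,
      Function.iterate_succ_apply]
    show (fun Q' => pderiv i Q')^[m] (pderiv i (P + Q)) = _
    rw [map_add, ih]

lemma pdOp_add (β : Fin n →₀ ℕ) (P Q : MvPolynomial (Fin n) ℂ) :
    pdOp β (P + Q) = pdOp β P + pdOp β Q := by
  rw [pdOp, pdOp, pdOp]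
  generalize (List.finRange n) = L
  induction L generalizing P Q with
  | nil => rfl
  | cons a L ih =>
    rw [List.foldl_cons, List.foldl_cons, List.foldl_cons]
    show L.foldl _ ((fun Q' => pderiv a Q')^[β a] (P + Q)) = _
    rw [iter_pderiv_add, ih]

lemma pdOp_zero (β : Fin n →₀ ℕ) : pdOp β (0 : MvPolynomial (Fin n) ℂ) = 0 := by
  have := pdOp_add β (0 : MvPolynomial (Fin n) ℂ) 0
  rw [add_zero] at this
  exact (add_eq_left.mp this.symm)

lemma freeLift_X (w : FreeMonoid (Fin n)) :
    FreeMonoid.lift (fun i => (X i : MvPolynomial (Fin n) ℂ)) w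
      = monomial (degOf (FreeMonoid.toList w)) 1 := by
  rw [FreeMonoid.lift_apply]
  generalize FreeMonoid.toList w = l
  induction l with
  | nil => simp [degOf]
  | cons a l ih =>
    rw [List.map_cons, List.prod_cons, ih, degOf_cons, X, monomial_mul, one_mul]

lemma chiMap_single (w : FreeMonoid (Fin n)) (c : ℂ) :
    chiMap n (MonoidAlgebra.single w c) = monomial (degOf (FreeMonoid.toList w)) c := by
  unfold chiMap
  rw [MonoidAlgebra.lift_single, freeLift_X, smul_monomial, smul_eq_mul, mul_one]

lemma psiMap_add (P Q : MvPolynomial (Fin n) ℂ) :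
    psiMap (P + Q) = psiMap P + psiMap Q := by
  unfold psiMap
  rw [AddMonoidAlgebra.coeff_add]
  exact Finsupp.sum_add_index' (fun α => zero_smul ℂ _) (fun α b₁ b₂ => add_smul b₁ b₂ _)

lemma psiMap_single (α : Fin n →₀ ℕ) (c : ℂ) :
    psiMap (monomial α c) = c • sympWord (wordOf α) := by
  unfold psiMap
  rw [← single_eq_monomial, AddMonoidAlgebra.coeff_single]
  exact Finsupp.sum_single_index (zero_smul ℂ _)

lemma key (w : FreeMonoid (Fin n)) (P : MvPolynomial (Fin n) ℂ) :
    (psiMap P).coeff w = MvPolynomial.constantCoeff (pdOp (degOf (FreeMonoid.toList w)) P) := by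
  classical
  induction P using MvPolynomial.induction_on' with
  | monomial α c =>
    rw [psiMap_single, constantCoeff_pdOp_monomial, MonoidAlgebra.coeff_smul, Finsupp.smul_apply, smul_eq_mul,
      sympWord_apply, degOf_wordOf]
    by_cases h : degOf (FreeMonoid.toList w) = α
    · rw [if_pos h, if_pos h]
      ring
    · rw [if_neg h, if_neg h, mul_zero]
  | add P Q ihP ihQ =>
    rw [psiMap_add, pdOp_add, map_add, MonoidAlgebra.coeff_add, Finsupp.add_apply, ihP, ihQ]

theorem ct_fd_psi_eq_ct_diffOp' {n : ℕ} (P : MvPolynomial (Fin n) ℂ) (f : NCPoly n) :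
    (fdApply f (psiMap P)).coeff (1 : FreeMonoid (Fin n)) =
      MvPolynomial.constantCoeff (diffOp (chiMap n f) P) := by
  classical
  induction f using MonoidAlgebra.induction with
  | zero =>
    unfold fdApply diffOp
    rw [MonoidAlgebra.coeff_zero, Finsupp.sum_zero_index, map_zero, AddMonoidAlgebra.coeff_zero,
      Finsupp.sum_zero_index, map_zero]
    rfl
  | single_add w c f hw hc ih =>
    have hL : fdApply (MonoidAlgebra.single w c + f) (psiMap P)
        = c • Dop w (psiMap P) + fdApply f (psiMap P) := by
      unfold fdApply
      have h1 : ((MonoidAlgebra.single w c + f).coeff.sum fun w c => c • Dop w (psiMap P))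
          = ((MonoidAlgebra.single w c).coeff.sum fun w c => c • Dop w (psiMap P))
            + f.coeff.sum fun w c => c • Dop w (psiMap P) :=
        Finsupp.sum_add_index' (fun a => zero_smul ℂ _) (fun a b₁ b₂ => add_smul b₁ b₂ _)
      rw [h1, MonoidAlgebra.coeff_single, Finsupp.sum_single_index (h := fun w c => c • Dop w (psiMap P)) (zero_smul ℂ _)]
    have hR : chiMap n (MonoidAlgebra.single w c + f)
        = monomial (degOf (FreeMonoid.toList w)) c + chiMap n f := by
      rw [map_add, chiMap_single]
    have hD : diffOp (monomial (degOf (FreeMonoid.toList w)) c + chiMap n f) P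
        = c • pdOp (degOf (FreeMonoid.toList w)) P + diffOp (chiMap n f) P := by
      unfold diffOp
      have h1 : ((AddMonoidAlgebra.coeff (monomial (degOf (FreeMonoid.toList w)) c + chiMap n f)).sum
            fun β c => c • pdOp β P)
          = ((AddMonoidAlgebra.coeff (monomial (degOf (FreeMonoid.toList w)) c)).sum fun β c => c • pdOp β P)
            + (AddMonoidAlgebra.coeff (chiMap n f)).sum fun β c => c • pdOp β P :=
        Finsupp.sum_add_index' (fun a => zero_smul ℂ _) (fun a b₁ b₂ => add_smul b₁ b₂ _)
      rw [h1, ← single_eq_monomial, AddMonoidAlgebra.coeff_single,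
        Finsupp.sum_single_index (h := fun β c => c • pdOp β P) (zero_smul ℂ _)]
    rw [hL, hR, hD, map_add, MvPolynomial.constantCoeff_smul, MonoidAlgebra.coeff_add, Finsupp.add_apply,
      MonoidAlgebra.coeff_smul, Finsupp.smul_apply, smul_eq_mul, smul_eq_mul, ih]
    congr 1
    unfold Dop
    show c * (psiMap P).coeff (w * 1) = _
    rw [mul_one, key]

/-- For `P ∈ ℂ[x₁,…,xₙ]` and `f ∈ ℂ⟨x₁,…,xₙ⟩`,
`[f⃖(d)·ψ(P)]_{c.t.} = [χ(f)(∂)·P]_{c.t.}`. -/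
theorem ct_fd_psi_eq_ct_diffOp {n : ℕ} (P : MvPolynomial (Fin n) ℂ) (f : NCPoly n) :
    (fdApply f (psiMap P)).coeff (1 : FreeMonoid (Fin n)) =
      MvPolynomial.constantCoeff (diffOp (chiMap n f) P) := by
  exact ct_fd_psi_eq_ct_diffOp' P f
end

section
/- The set {𝒜_Φ : Φ = (Φ₁,…,Φₙ) a generalized set composition of [d] with at most Φₙ empty and all nonempty parts ordered so that min Φ_i < min Φ_{i+1}} is a linear basis of Alt_n^{(d)}, the space of degree-d alternating elements of ℂ⟨x₁,…,xₙ⟩. -/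
/-- A generalized set composition `A = (A₁,…,Aₙ)` of `[d]` is encoded by the function
`g : Fin d → Fin n` with `i ∈ A_j ↔ g i = j`; the corresponding word has `i`-th letter
`x_{g i}`.  The alternating sum is `𝒜_A = Σ_{σ∈S_n} (−1)^{ℓ(σ)} σ∘A`. -/
noncomputable def AltSum (n d : ℕ) (g : Fin d → Fin n) : NCPoly n :=
  ∑ σ : Equiv.Perm (Fin n),
    ((Equiv.Perm.sign σ : ℤ) : ℂ) •
      MonoidAlgebra.single (FreeMonoid.ofList (List.ofFn fun i => σ (g i))) (1 : ℂ)

/-- The generalized set composition encoded by `g : Fin d → Fin n` is "ordered":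
all parts except possibly the last one are nonempty, and nonempty parts are listed
in increasing order of their minima (every part with a smaller index has an occurrence
strictly before all occurrences of any nonempty part with larger index). -/
def OrderedGSC {n d : ℕ} (g : Fin d → Fin n) : Prop :=
  (∀ j : Fin n, (j : ℕ) + 1 < n → ∃ i, g i = j) ∧
  (∀ j j' : Fin n, j' < j → (∃ i, g i = j) →
    ∃ i', g i' = j' ∧ ∀ i, g i = j → i' < i)

/-- The action of `σ ∈ S_n` on `ℂ⟨x₁,…,xₙ⟩` permuting the variable indices. -/
noncomputable def permAct {n : ℕ} (σ : Equiv.Perm (Fin n)) (f : NCPoly n) : NCPoly n :=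
  MonoidAlgebra.ofCoeff (Finsupp.mapDomain (⇑(FreeMonoid.map ⇑σ)) f.coeff)

namespace AltBasis

open Finsupp Equiv Finset

open scoped Classical

variable {n d : ℕ}

/-- The word attached to `g`. -/
def word (h : Fin d → Fin n) : FreeMonoid (Fin n) := FreeMonoid.ofList (List.ofFn h)

lemma word_inj : Function.Injective (word (n := n) (d := d)) := by
  intro a b hab
  have : List.ofFn a = List.ofFn b := by
    have := congrArg FreeMonoid.toList hab
    simpa [word, FreeMonoid.toList_ofList] using this
  exact List.ofFn_injective this

lemma length_word (h : Fin d → Fin n) : FreeMonoid.length (word h) = d := by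
  show (List.ofFn h).length = d
  simp

lemma map_word (σ : Fin n → Fin n) (h : Fin d → Fin n) :
    (FreeMonoid.map σ) (word h) = word (σ ∘ h) := by
  show FreeMonoid.ofList ((List.ofFn h).map σ) = _
  rw [List.map_ofFn]
  rfl

lemma altSum_eq (g : Fin d → Fin n) :
    (AltSum n d g).coeff = ∑ σ : Equiv.Perm (Fin n),
      ((Equiv.Perm.sign σ : ℤ) : ℂ) • Finsupp.single (word (⇑σ ∘ g)) (1 : ℂ) := by
  rw [AltSum, MonoidAlgebra.coeff_sum]; rfl

lemma altSum_apply (g : Fin d → Fin n) (w : FreeMonoid (Fin n)) :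
    (AltSum n d g).coeff w = ∑ σ : Equiv.Perm (Fin n),
      if word (⇑σ ∘ g) = w then ((Equiv.Perm.sign σ : ℤ) : ℂ) else 0 := by
  classical
  rw [altSum_eq, Finsupp.finset_sum_apply]
  refine Finset.sum_congr rfl fun σ _ => ?_
  rw [Finsupp.smul_apply, Finsupp.single_apply]
  by_cases h : word (⇑σ ∘ g) = w <;> simp [h]

lemma altSum_apply_of_length_ne {w : FreeMonoid (Fin n)} (hw : FreeMonoid.length w ≠ d)
    (g : Fin d → Fin n) : (AltSum n d g).coeff w = 0 := by
  rw [altSum_apply]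
  refine Finset.sum_eq_zero fun σ _ => ?_
  rw [if_neg]
  intro he
  exact hw (by rw [← he, length_word])

/-- First occurrence (as a natural number) of color `c` in `h`; `d` if missing. -/
noncomputable def Fo (h : Fin d → Fin n) (c : Fin n) : ℕ :=
  if H : ∃ i, h i = c then
    ((Finset.univ.filter fun i => h i = c).min'
      (by obtain ⟨i, hi⟩ := H; exact ⟨i, by simp [hi]⟩) : Fin d).val
  else d

lemma Fo_lt {h : Fin d → Fin n} {c : Fin n} (H : ∃ i, h i = c) : Fo h c < d := by
  rw [Fo, dif_pos H]; exact Fin.is_lt _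

lemma Fo_eq_d {h : Fin d → Fin n} {c : Fin n} (H : ¬ ∃ i, h i = c) : Fo h c = d :=
  dif_neg H

lemma Fo_le_d (h : Fin d → Fin n) (c : Fin n) : Fo h c ≤ d := by
  by_cases H : ∃ i, h i = c
  · exact (Fo_lt H).le
  · exact (Fo_eq_d H).le

lemma exists_of_Fo_lt {h : Fin d → Fin n} {c : Fin n} (H : Fo h c < d) : ∃ i, h i = c := by
  by_contra hc; rw [Fo_eq_d hc] at H; exact lt_irrefl _ H

lemma h_Fo {h : Fin d → Fin n} {c : Fin n} (H : ∃ i, h i = c) :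
    h ⟨Fo h c, Fo_lt H⟩ = c := by
  have hne : (Finset.univ.filter fun i => h i = c).Nonempty := by
    obtain ⟨i, hi⟩ := H; exact ⟨i, by simp [hi]⟩
  have hmem := Finset.min'_mem _ hne
  rw [Finset.mem_filter] at hmem
  have hval : Fo h c = ((Finset.univ.filter fun i => h i = c).min' hne : Fin d).val := by
    simp only [Fo, dif_pos H]
  have heq : (⟨Fo h c, Fo_lt H⟩ : Fin d) = (Finset.univ.filter fun i => h i = c).min' hne :=
    Fin.ext hval
  rw [heq]; exact hmem.2

lemma Fo_le {h : Fin d → Fin n} {c : Fin n} (i : Fin d) (hc : h i = c) : Fo h c ≤ (i : ℕ) := by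
  rw [Fo, dif_pos ⟨i, hc⟩]
  exact Finset.min'_le _ i (by simp [hc])

lemma Fo_inj_of_ex {h : Fin d → Fin n} {c₁ c₂ : Fin n} (H1 : ∃ i, h i = c₁)
    (he : Fo h c₁ = Fo h c₂) : c₁ = c₂ := by
  have H2 : ∃ i, h i = c₂ := exists_of_Fo_lt (he ▸ Fo_lt H1)
  rw [← h_Fo H1, ← h_Fo H2]
  congr 1
  exact Fin.ext he

/-- At most one color is missing from `h`. -/
def AtMostOne (h : Fin d → Fin n) : Prop :=
  ∀ c₁ c₂ : Fin n, (¬ ∃ i, h i = c₁) → (¬ ∃ i, h i = c₂) → c₁ = c₂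

lemma Fo_inj {h : Fin d → Fin n} (H : AtMostOne h) : Function.Injective (Fo h) := by
  intro c₁ c₂ he
  by_cases H1 : ∃ i, h i = c₁
  · exact Fo_inj_of_ex H1 he
  · by_cases H2 : ∃ i, h i = c₂
    · exact (Fo_inj_of_ex H2 he.symm).symm
    · exact H c₁ c₂ H1 H2

/-- The rank of a color by first occurrence order. -/
noncomputable def rk (h : Fin d → Fin n) (c : Fin n) : ℕ :=
  (Finset.univ.filter fun c' => Fo h c' < Fo h c).card

lemma rk_lt (h : Fin d → Fin n) (c : Fin n) : rk h c < n := by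
  have hsub : (Finset.univ.filter fun c' => Fo h c' < Fo h c) ⊆ Finset.univ.erase c := by
    intro c' hc'
    rw [Finset.mem_filter] at hc'
    exact Finset.mem_erase.mpr ⟨fun he => by rw [he] at hc'; exact lt_irrefl _ hc'.2, hc'.1⟩
  calc rk h c ≤ (Finset.univ.erase c).card := Finset.card_le_card hsub
    _ = n - 1 := by rw [Finset.card_erase_of_mem (Finset.mem_univ c)]; simp
    _ < n := by have := c.pos; omega

lemma rk_lt_rk {h : Fin d → Fin n} {c c' : Fin n} (hlt : Fo h c < Fo h c') :
    rk h c < rk h c' := by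
  apply Finset.card_lt_card
  constructor
  · intro x hx
    rw [Finset.mem_filter] at hx ⊢
    exact ⟨hx.1, hx.2.trans hlt⟩
  · intro hsub
    have : c ∈ Finset.univ.filter fun x => Fo h x < Fo h c' := by simp [hlt]
    have := hsub this
    rw [Finset.mem_filter] at this
    exact lt_irrefl _ this.2

lemma rk_inj {h : Fin d → Fin n} (H : AtMostOne h) :
    Function.Injective (rk h) := by
  intro c₁ c₂ he
  rcases lt_trichotomy (Fo h c₁) (Fo h c₂) with hl | hl | hl
  · exact absurd he (rk_lt_rk hl).ne
  · exact Fo_inj H hl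
  · exact absurd he.symm (rk_lt_rk hl).ne

/-- Normalization map on colors. -/
noncomputable def rho (h : Fin d → Fin n) (c : Fin n) : Fin n := ⟨rk h c, rk_lt h c⟩

lemma rho_inj {h : Fin d → Fin n} (H : AtMostOne h) : Function.Injective (rho h) :=
  fun a b e => rk_inj H (congrArg Fin.val e)

lemma ordered_normal (h : Fin d → Fin n) (H : AtMostOne h)
    (hbij : Function.Bijective (rho h)) : OrderedGSC (fun i => rho h (h i)) := by
  constructor
  · intro j hj
    obtain ⟨c, hc⟩ := hbij.surjective j
    by_cases Hc : ∃ i, h i = c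
    · obtain ⟨i, hi⟩ := Hc
      refine ⟨i, ?_⟩
      show rho h (h i) = j
      rw [hi, hc]
    · exfalso
      -- rank of a missing color is at least n - 1
      have hmiss : (Finset.univ.filter fun c' : Fin n => ¬ ∃ i, h i = c') ⊆ {c} := by
        intro c' hc'
        rw [Finset.mem_filter] at hc'
        exact Finset.mem_singleton.mpr (H c' c hc'.2 Hc)
      have hcard := Finset.card_filter_add_card_filter_not
        (s := (Finset.univ : Finset (Fin n))) (fun c' : Fin n => ∃ i, h i = c')
      have hle : (Finset.univ.filter fun c' : Fin n => ¬ ∃ i, h i = c').card ≤ 1 := by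
        calc _ ≤ ({c} : Finset (Fin n)).card := Finset.card_le_card hmiss
          _ = 1 := Finset.card_singleton c
      have hpres : n - 1 ≤ (Finset.univ.filter fun c' : Fin n => ∃ i, h i = c').card := by
        rw [Finset.card_univ, Fintype.card_fin] at hcard; omega
      have hsub : (Finset.univ.filter fun c' : Fin n => ∃ i, h i = c') ⊆
          Finset.univ.filter fun c' => Fo h c' < Fo h c := by
        intro c' hc'
        rw [Finset.mem_filter] at hc' ⊢
        exact ⟨hc'.1, by rw [Fo_eq_d Hc]; exact Fo_lt hc'.2⟩
      have : n - 1 ≤ rk h c := hpres.trans (Finset.card_le_card hsub)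
      have hjc : (j : ℕ) = rk h c := by rw [← hc]; rfl
      omega
  · intro j j' hlt hex
    obtain ⟨i, hi⟩ := hex
    have hi' : rho h (h i) = j := hi
    set c := h i with hc
    obtain ⟨c', hc'⟩ := hbij.surjective j'
    have hFo : Fo h c' < Fo h c := by
      rcases lt_trichotomy (Fo h c') (Fo h c) with hl | hl | hl
      · exact hl
      · exfalso
        have hcc : c' = c := Fo_inj H hl
        rw [hcc, hi'] at hc'
        exact absurd hc'.symm hlt.ne
      · exfalso
        have : rk h c < rk h c' := rk_lt_rk hl
        have h1 : (j : ℕ) = rk h c := by rw [← hi']; rfl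
        have h2 : (j' : ℕ) = rk h c' := by rw [← hc']; rfl
        have := hlt
        rw [Fin.lt_def] at this
        omega
    have hc'lt : Fo h c' < d := lt_of_lt_of_le hFo (Fo_le_d h c)
    have hpres : ∃ i, h i = c' := exists_of_Fo_lt hc'lt
    refine ⟨⟨Fo h c', hc'lt⟩, ?_, ?_⟩
    · show rho h (h _) = j'
      rw [show h ⟨Fo h c', hc'lt⟩ = c' from h_Fo hpres, hc']
    · intro i₂ hi₂
      have hi₂' : rho h (h i₂) = j := hi₂
      have hhi₂ : h i₂ = c := by
        apply rho_inj H
        show rho h (h i₂) = rho h (h i)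
        rw [hi₂', hi']
      have : Fo h c ≤ (i₂ : ℕ) := Fo_le i₂ hhi₂
      rw [Fin.lt_def]
      exact lt_of_lt_of_le hFo this

lemma exists_ordered (h : Fin d → Fin n) (H : AtMostOne h) :
    ∃ (g : Fin d → Fin n) (σ : Equiv.Perm (Fin n)), OrderedGSC g ∧ ⇑σ ∘ g = h := by
  have hbij : Function.Bijective (rho h) :=
    Finite.injective_iff_bijective.mp (rho_inj H)
  let ρ : Equiv.Perm (Fin n) := Equiv.ofBijective _ hbij
  refine ⟨fun i => rho h (h i), ρ.symm, ordered_normal h H hbij, funext fun i => ?_⟩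
  show ρ.symm (rho h (h i)) = h i
  exact ρ.symm_apply_apply (h i)

lemma ordered_atMostOne {g : Fin d → Fin n} (hg : OrderedGSC g) : AtMostOne g := by
  intro c₁ c₂ h1 h2
  have k1 : ¬ ((c₁ : ℕ) + 1 < n) := fun hc => h1 (hg.1 c₁ hc)
  have k2 : ¬ ((c₂ : ℕ) + 1 < n) := fun hc => h2 (hg.1 c₂ hc)
  have := c₁.is_lt; have := c₂.is_lt
  exact Fin.ext (by omega)

lemma ordered_strictMono {g : Fin d → Fin n} (hg : OrderedGSC g) : StrictMono (Fo g) := by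
  intro c' c hlt
  rw [Fin.lt_def] at hlt
  have hc' : ∃ i, g i = c' := hg.1 c' (by have := c.is_lt; omega)
  by_cases hc : ∃ i, g i = c
  · obtain ⟨i', hgi', hall⟩ := hg.2 c c' (Fin.lt_def.mpr hlt) hc
    have h1 : Fo g c' ≤ (i' : ℕ) := Fo_le i' hgi'
    have h2 : i' < (⟨Fo g c, Fo_lt hc⟩ : Fin d) := hall _ (h_Fo hc)
    rw [Fin.lt_def] at h2
    exact lt_of_le_of_lt h1 h2
  · rw [Fo_eq_d hc]
    exact Fo_lt hc'

lemma strict_perm_id (π : Equiv.Perm (Fin n)) (hm : StrictMono ⇑π) : ∀ x, π x = x := by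
  intro x
  have h1 : (StrictMono.orderIsoOfSurjective ⇑π hm π.surjective) = OrderIso.refl (Fin n) :=
    Subsingleton.elim _ _
  have h2 := congrArg (fun e : Fin n ≃o Fin n => e x) h1
  simpa [StrictMono.coe_orderIsoOfSurjective] using h2

lemma perm_eq_of_eventually (σ τ : Equiv.Perm (Fin n))
    (H : ∀ j : Fin n, (j : ℕ) + 1 < n → σ j = τ j) : σ = τ := by
  rcases Nat.eq_zero_or_pos n with hn | hn
  · subst hn; exact Equiv.ext fun j => j.elim0
  set π : Equiv.Perm (Fin n) := τ⁻¹ * σ with hπ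
  have key : ∀ j : Fin n, (j : ℕ) + 1 < n → π j = j := by
    intro j hj
    show τ⁻¹ (σ j) = j
    rw [H j hj]
    exact τ.symm_apply_apply j
  set a : Fin n := ⟨n - 1, by omega⟩ with ha
  have hne : ∀ j : Fin n, j ≠ a → (j : ℕ) + 1 < n := by
    intro j hj
    have := j.is_lt
    have : (j : ℕ) ≠ n - 1 := fun he => hj (Fin.ext he)
    omega
  have hπa : π a = a := by
    by_contra hcon
    have hja : π a ≠ a := hcon
    have h1 : π (π a) = π a := key (π a) (hne _ hja)
    exact hja (π.injective h1)
  have hπ1 : π = 1 := by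
    apply Equiv.ext
    intro j
    by_cases hj : j = a
    · rw [hj]; exact hπa
    · exact key j (hne j hj)
  have : τ⁻¹ * σ = 1 := hπ1
  calc σ = τ * (τ⁻¹ * σ) := by group
    _ = τ := by rw [this, mul_one]

lemma min'_congr {α : Type*} [LinearOrder α] (s t : Finset α) (h : s = t)
    (hs : s.Nonempty) (ht : t.Nonempty) : s.min' hs = t.min' ht := by subst h; rfl

lemma Fo_comp_perm {g g' : Fin d → Fin n} (π : Equiv.Perm (Fin n))
    (hπg : ∀ i, π (g i) = g' i) (c : Fin n) : Fo g' (π c) = Fo g c := by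
  have hset : (Finset.univ.filter fun i => g' i = π c) =
      Finset.univ.filter fun i => g i = c := by
    ext i
    simp only [Finset.mem_filter, Finset.mem_univ, true_and]
    rw [← hπg i]
    exact π.injective.eq_iff
  have hiff : (∃ i, g' i = π c) ↔ (∃ i, g i = c) := by
    constructor
    · rintro ⟨i, hi⟩; exact ⟨i, π.injective (by rw [hπg i, hi])⟩
    · rintro ⟨i, hi⟩; exact ⟨i, by rw [← hπg i, hi]⟩
  by_cases Hc : ∃ i, g i = c
  · rw [Fo, dif_pos (hiff.mpr Hc), Fo, dif_pos Hc]
    congr 1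
    apply min'_congr _ _ hset
  · rw [Fo_eq_d (fun hx => Hc (hiff.mp hx)), Fo_eq_d Hc]

lemma ordered_unique {g g' : Fin d → Fin n} (hg : OrderedGSC g) (hg' : OrderedGSC g')
    (σ τ : Equiv.Perm (Fin n)) (hστ : ⇑σ ∘ g = ⇑τ ∘ g') : g = g' ∧ σ = τ := by
  set π : Equiv.Perm (Fin n) := τ⁻¹ * σ with hπdef
  have hπg : ∀ i, π (g i) = g' i := by
    intro i
    show τ⁻¹ (σ (g i)) = g' i
    have := congrFun hστ i
    simp only [Function.comp_apply] at this
    rw [this]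
    exact τ.symm_apply_apply (g' i)
  have hmono : StrictMono ⇑π := by
    intro a b hab
    have h1 : Fo g a < Fo g b := ordered_strictMono hg hab
    rw [← Fo_comp_perm π hπg a, ← Fo_comp_perm π hπg b] at h1
    exact (ordered_strictMono hg').lt_iff_lt.mp h1
  have hπ1 := strict_perm_id π hmono
  have hgg' : g = g' := funext fun i => by rw [← hπg i, hπ1]
  subst hgg'
  refine ⟨rfl, ?_⟩
  apply perm_eq_of_eventually
  intro j hj
  obtain ⟨i, hi⟩ := hg.1 j hj
  rw [← hi]
  exact congrFun hστ i

lemma no_sigma {g h : Fin d → Fin n} (hg : OrderedGSC g) (H : ¬ AtMostOne h)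
    (σ : Equiv.Perm (Fin n)) : ⇑σ ∘ g ≠ h := by
  intro he
  apply H
  intro c₁ c₂ h1 h2
  have key : ∀ c : Fin n, (¬ ∃ i, h i = c) → ¬ ∃ i, g i = σ⁻¹ c := by
    rintro c hc ⟨i, hi⟩
    exact hc ⟨i, by rw [← he]; show σ (g i) = c; rw [hi]; exact σ.apply_symm_apply c⟩
  have := ordered_atMostOne hg (σ⁻¹ c₁) (σ⁻¹ c₂) (key c₁ h1) (key c₂ h2)
  have := congrArg σ this
  simpa using this

lemma sign_sq (τ : Equiv.Perm (Fin n)) :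
    ((Equiv.Perm.sign τ : ℤ) : ℂ) * ((Equiv.Perm.sign τ : ℤ) : ℂ) = 1 := by
  rw [← Int.cast_mul, ← Units.val_mul, Int.units_mul_self, Units.val_one, Int.cast_one]

lemma permAct_altSum (τ : Equiv.Perm (Fin n)) (g : Fin d → Fin n) :
    permAct τ (AltSum n d g) = ((Equiv.Perm.sign τ : ℤ) : ℂ) • AltSum n d g := by
  apply MonoidAlgebra.coeff_injective
  rw [permAct, MonoidAlgebra.coeff_ofCoeff, MonoidAlgebra.coeff_smul, altSum_eq]
  have hsum : Finsupp.mapDomain (⇑(FreeMonoid.map ⇑τ))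
      (∑ σ : Equiv.Perm (Fin n),
        ((Equiv.Perm.sign σ : ℤ) : ℂ) • Finsupp.single (word (⇑σ ∘ g)) (1 : ℂ)) =
      ∑ σ : Equiv.Perm (Fin n),
        ((Equiv.Perm.sign σ : ℤ) : ℂ) • Finsupp.single (word (⇑τ ∘ (⇑σ ∘ g))) (1 : ℂ) := by
    rw [show (Finsupp.mapDomain (⇑(FreeMonoid.map ⇑τ)) :
        (FreeMonoid (Fin n) →₀ ℂ) → (FreeMonoid (Fin n) →₀ ℂ)) =
        ⇑(Finsupp.mapDomain.addMonoidHom (⇑(FreeMonoid.map ⇑τ))) from rfl]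
    rw [map_sum]
    refine Finset.sum_congr rfl fun σ _ => ?_
    show Finsupp.mapDomain _ _ = _
    rw [Finsupp.mapDomain_smul, Finsupp.mapDomain_single, map_word]
  rw [hsum, Finset.smul_sum]
  refine Fintype.sum_equiv (Equiv.mulLeft τ) _ _ fun σ => ?_
  show ((Equiv.Perm.sign σ : ℤ) : ℂ) • Finsupp.single (word (⇑τ ∘ (⇑σ ∘ g))) (1 : ℂ) =
    ((Equiv.Perm.sign τ : ℤ) : ℂ) •
      (((Equiv.Perm.sign (τ * σ) : ℤ) : ℂ) • Finsupp.single (word (⇑(τ * σ) ∘ g)) (1 : ℂ))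
  rw [smul_smul]
  have hw : word (⇑τ ∘ (⇑σ ∘ g)) = word (⇑(τ * σ) ∘ g) := by
    congr 1
  rw [hw]
  congr 1
  rw [Equiv.Perm.sign_mul, Units.val_mul, Int.cast_mul, ← mul_assoc, sign_sq, one_mul]

lemma altSum_apply_word_ordered {g g' : Fin d → Fin n} (hg : OrderedGSC g)
    (hg' : OrderedGSC g') :
    (AltSum n d g').coeff (word g) = if g' = g then 1 else 0 := by
  rw [altSum_apply]
  by_cases he : g' = g
  · subst he
    rw [if_pos rfl]
    rw [Finset.sum_eq_single (1 : Equiv.Perm (Fin n))]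
    · rw [if_pos (by simp), Equiv.Perm.sign_one]
      norm_num
    · intro σ _ hσ
      rw [if_neg]
      intro hw
      have h1 : ⇑σ ∘ g' = g' := word_inj hw
      have h2 : ⇑σ ∘ g' = ⇑(1 : Equiv.Perm (Fin n)) ∘ g' := by simpa using h1
      exact hσ (ordered_unique hg' hg' σ 1 h2).2
    · intro h; exact absurd (Finset.mem_univ _) h
  · rw [if_neg he]
    apply Finset.sum_eq_zero
    intro σ _
    rw [if_neg]
    intro hw
    have h1 : ⇑σ ∘ g' = g := word_inj hw
    have h2 : ⇑σ ∘ g' = ⇑(1 : Equiv.Perm (Fin n)) ∘ g := by simpa using h1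
    exact he (ordered_unique hg' hg σ 1 h2).1

/-- The space of degree-`d` alternating elements, as a submodule. -/
noncomputable def altSub (n d : ℕ) : Submodule ℂ (NCPoly n) where
  carrier := {f : NCPoly n | (∀ w ∈ f.coeff.support, FreeMonoid.length w = d) ∧
    ∀ σ : Equiv.Perm (Fin n), permAct σ f = ((Equiv.Perm.sign σ : ℤ) : ℂ) • f}
  zero_mem' := ⟨by simp, fun σ => by simp [permAct]⟩
  add_mem' := by
    rintro a b ⟨ha1, ha2⟩ ⟨hb1, hb2⟩
    constructor
    · intro w hw
      rcases Finset.mem_union.mp (Finsupp.support_add hw) with h | h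
      · exact ha1 w h
      · exact hb1 w h
    · intro σ
      show MonoidAlgebra.ofCoeff (Finsupp.mapDomain _ (a.coeff + b.coeff)) = _
      rw [Finsupp.mapDomain_add]
      show permAct σ a + permAct σ b = _
      rw [ha2 σ, hb2 σ, smul_add]
  smul_mem' := by
    rintro c f ⟨h1, h2⟩
    constructor
    · intro w hw
      exact h1 w (Finsupp.support_smul hw)
    · intro σ
      show MonoidAlgebra.ofCoeff (Finsupp.mapDomain _ (c • f.coeff)) = _
      rw [Finsupp.mapDomain_smul]
      show c • permAct σ f = _
      rw [h2 σ, smul_comm]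

lemma altSum_mem (g : Fin d → Fin n) : AltSum n d g ∈ altSub n d := by
  constructor
  · intro w hw
    by_contra hlen
    exact (Finsupp.mem_support_iff.mp hw) (altSum_apply_of_length_ne hlen g)
  · intro σ
    exact permAct_altSum σ g

lemma freeMonoidMap_inj (σ : Equiv.Perm (Fin n)) :
    Function.Injective ⇑(FreeMonoid.map (⇑σ : Fin n → Fin n)) := by
  intro a b hab
  have h1 := congrArg FreeMonoid.toList hab
  rw [FreeMonoid.toList_map, FreeMonoid.toList_map] at h1
  have h2 := List.map_injective_iff.mpr σ.injective h1
  rw [← FreeMonoid.ofList_toList a, h2, FreeMonoid.ofList_toList]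

lemma apply_word_eq {f : NCPoly n} (hf : f ∈ altSub n d) (σ : Equiv.Perm (Fin n))
    (g : Fin d → Fin n) :
    f.coeff (word g) = ((Equiv.Perm.sign σ : ℤ) : ℂ) * f.coeff (word (⇑σ ∘ g)) := by
  have hev := congrArg (fun F : NCPoly n => F.coeff (word (⇑σ ∘ g))) (hf.2 σ)
  simp only [MonoidAlgebra.coeff_smul, Finsupp.smul_apply, smul_eq_mul] at hev
  have hL : (permAct σ f).coeff (word (⇑σ ∘ g)) = f.coeff (word g) := by
    rw [← map_word]
    exact Finsupp.mapDomain_apply (freeMonoidMap_inj σ) f.coeff (word g)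
  rw [hL] at hev
  exact hev

lemma mem_span (f : NCPoly n) (hf : f ∈ altSub n d) :
    f ∈ Submodule.span ℂ
      (Set.range fun g : {g : Fin d → Fin n // OrderedGSC g} => AltSum n d g.1) := by
  haveI : DecidablePred (OrderedGSC (n := n) (d := d)) := Classical.decPred _
  have key : f = ∑ g : {g : Fin d → Fin n // OrderedGSC g},
      f.coeff (word g.1) • AltSum n d g.1 := by
    ext w
    rw [MonoidAlgebra.coeff_sum, Finsupp.finset_sum_apply]
    have hsm : ∀ (c : ℂ) (F : NCPoly n) (u : FreeMonoid (Fin n)), (c • F).coeff u = c * F.coeff u := by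
      intro c F u; rfl
    simp only [hsm]
    by_cases hlen : FreeMonoid.length w = d
    · -- w is a word of length d
      have hlen' : (FreeMonoid.toList w).length = d := hlen
      set h : Fin d → Fin n := fun i => (FreeMonoid.toList w).get (Fin.cast hlen'.symm i)
        with hdef
      have hwh : word h = w := by
        conv_rhs => rw [← FreeMonoid.ofList_toList w]
        show FreeMonoid.ofList (List.ofFn h) = FreeMonoid.ofList (FreeMonoid.toList w)
        congr 1
        apply List.ext_get
        · simp [hlen']
        · intro i h1 h2
          rw [List.get_ofFn]
          rfl
      rw [← hwh]
      by_cases HAM : AtMostOne h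
      · obtain ⟨g₀, σ₀, hg₀, hσ₀⟩ := exists_ordered h HAM
        rw [Finset.sum_eq_single (⟨g₀, hg₀⟩ : {g : Fin d → Fin n // OrderedGSC g})]
        · have hA : (AltSum n d g₀).coeff (word h) = ((Equiv.Perm.sign σ₀ : ℤ) : ℂ) := by
            rw [altSum_apply]
            rw [Finset.sum_eq_single σ₀]
            · rw [if_pos (by rw [hσ₀])]
            · intro σ _ hσ
              rw [if_neg]
              intro hw
              have h1 : ⇑σ ∘ g₀ = ⇑σ₀ ∘ g₀ := (word_inj hw).trans hσ₀.symm
              exact hσ (ordered_unique hg₀ hg₀ σ σ₀ h1).2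
            · intro hmem; exact absurd (Finset.mem_univ _) hmem
          rw [hA]
          have hfe : f.coeff (word g₀) = ((Equiv.Perm.sign σ₀ : ℤ) : ℂ) * f.coeff (word h) := by
            rw [apply_word_eq hf σ₀ g₀, hσ₀]
          rw [hfe, mul_comm (((Equiv.Perm.sign σ₀ : ℤ) : ℂ)) (f.coeff (word h)), mul_assoc,
            sign_sq, mul_one]
        · intro b _ hb
          have hz : (AltSum n d b.1).coeff (word h) = 0 := by
            rw [altSum_apply]
            apply Finset.sum_eq_zero
            intro σ _
            rw [if_neg]
            intro hw
            have h1 : ⇑σ ∘ b.1 = ⇑σ₀ ∘ g₀ := (word_inj hw).trans hσ₀.symm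
            exact hb (Subtype.ext (ordered_unique b.2 hg₀ σ σ₀ h1).1)
          rw [hz, mul_zero]
        · intro hmem; exact absurd (Finset.mem_univ _) hmem
      · -- two or more missing colors: both sides vanish
        have h0 : f.coeff (word h) = 0 := by
          rw [AtMostOne] at HAM
          push_neg at HAM
          obtain ⟨c₁, c₂, m₁, m₂, hne⟩ := HAM
          set τ := Equiv.swap c₁ c₂ with hτ
          have hτh : ⇑τ ∘ h = h := funext fun i =>
            Equiv.swap_apply_of_ne_of_ne (m₁ i) (m₂ i)
          have := apply_word_eq hf τ h
          rw [hτh, Equiv.Perm.sign_swap hne] at this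
          push_cast at this
          linear_combination (1 / 2 : ℂ) * this
        rw [h0]
        symm
        apply Finset.sum_eq_zero
        intro g _
        have hz : (AltSum n d g.1).coeff (word h) = 0 := by
          rw [altSum_apply]
          apply Finset.sum_eq_zero
          intro σ _
          rw [if_neg]
          intro hw
          exact no_sigma g.2 HAM σ (word_inj hw)
        rw [hz, mul_zero]
    · -- wrong length: both sides vanish
      have h0 : f.coeff w = 0 := by
        by_contra hc
        exact hlen (hf.1 w (Finsupp.mem_support_iff.mpr hc))
      rw [h0]
      symm
      apply Finset.sum_eq_zero
      intro g _
      rw [altSum_apply_of_length_ne hlen g.1, mul_zero]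
  rw [key]
  exact Submodule.sum_mem _ fun g _ =>
    Submodule.smul_mem _ _ (Submodule.subset_span ⟨g, rfl⟩)

end AltBasis

/-- The `𝒜_Φ`, for `Φ` an ordered generalized set composition of `[d]`
with at most the last part empty and nonempty parts ordered by increasing minima, form a
linear basis of `Alt_n^{(d)}`, the space of degree-`d` alternating elements of
`ℂ⟨x₁,…,xₙ⟩`. -/
theorem altSum_basis_of_alt (n d : ℕ) :
    LinearIndependent ℂ
      (fun g : {g : Fin d → Fin n // OrderedGSC g} => AltSum n d g.1) ∧
    (Submodule.span ℂ
        (Set.range fun g : {g : Fin d → Fin n // OrderedGSC g} => AltSum n d g.1) :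
        Set (NCPoly n)) =
      {f : NCPoly n |
        (∀ w ∈ f.coeff.support, FreeMonoid.length w = d) ∧
        ∀ σ : Equiv.Perm (Fin n), permAct σ f = ((Equiv.Perm.sign σ : ℤ) : ℂ) • f} := by
  constructor
  · rw [linearIndependent_iff']
    intro s c hsum g hgs
    have happ := congrArg (fun F : NCPoly n => F.coeff (AltBasis.word g.1)) hsum
    simp only [MonoidAlgebra.coeff_zero, Finsupp.coe_zero, Pi.zero_apply] at happ
    rw [MonoidAlgebra.coeff_sum, Finsupp.finset_sum_apply] at happ
    have hsm : ∀ (a : ℂ) (F : NCPoly n) (u : FreeMonoid (Fin n)), (a • F).coeff u = a * F.coeff u :=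
      fun a F u => rfl
    simp only [hsm] at happ
    rw [Finset.sum_eq_single g] at happ
    · rw [AltBasis.altSum_apply_word_ordered g.2 g.2, if_pos rfl, mul_one] at happ
      exact happ
    · intro b _ hb
      rw [AltBasis.altSum_apply_word_ordered g.2 b.2,
        if_neg (fun e => hb (Subtype.ext e)), mul_zero]
    · intro hg
      exact absurd hgs hg
  · apply Set.Subset.antisymm
    · intro x hx
      have hle : Submodule.span ℂ
          (Set.range fun g : {g : Fin d → Fin n // OrderedGSC g} => AltSum n d g.1) ≤
          AltBasis.altSub n d := by
        rw [Submodule.span_le]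
        rintro y ⟨g, rfl⟩
        exact AltBasis.altSum_mem g.1
      exact hle hx
    · intro f hf
      exact AltBasis.mem_span f hf
end

section
/- For a set partition Ψ ⊢ [k], a generalized set composition A ⊨ [ℓ], and an ordered generalized set composition Φ ⊨ [d] with at most one empty part, the element M⃖_Ψ(d)·d_{A⃖}·𝒜_Φ is either 0 or ±𝒜_{Θ^ε} for some two-colored generalized set composition Θ^ε. -/
open scoped BigOperators

open Classical in
/-- The operator `M⃖_Ψ(d) = Σ_{∇(w)=Ψ} d_{w⃖}` for a set partition `Ψ` of `[k]`, encoded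
as an equivalence relation on `Fin k`: the sum, over all words `w` of length `k` in
`x₁,…,xₙ` with fibre pattern `Ψ`, of the deletion of the prefix `w`. -/
noncomputable def MsymOp (n k : ℕ) (r : Setoid (Fin k)) (x : NCPoly n) : NCPoly n :=
  ∑ f : Fin k → Fin n,
    if (∀ i j, f i = f j ↔ r.r i j)
    then Dop (FreeMonoid.ofList (List.ofFn f)) x
    else 0

/-- `𝒜_{Θ^ε}` for a two-colored generalized set composition: `Θ` is encoded by
`h : Fin m → Fin n` and the color set `T = ε⁻¹(1)` by a finset of part indices;
the sum ranges over the permutations moving only indices in `T`. -/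
noncomputable def AltSumTC (n m : ℕ) (h : Fin m → Fin n) (T : Finset (Fin n)) : NCPoly n :=
  ∑ σ ∈ Finset.univ.filter (fun σ : Equiv.Perm (Fin n) => ∀ i ∉ T, σ i = i),
    ((Equiv.Perm.sign σ : ℤ) : ℂ) •
      MonoidAlgebra.single (FreeMonoid.ofList (List.ofFn fun i => σ (h i))) (1 : ℂ)

section Helpers

lemma Equiv.Perm.inv_apply_self {α : Type*} (f : Equiv.Perm α) (x : α) : f⁻¹ (f x) = x :=
  Equiv.symm_apply_apply f x

lemma Dop_apply {n : ℕ} (u : FreeMonoid (Fin n)) (x : NCPoly n) (w : FreeMonoid (Fin n)) :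
    (Dop u x).coeff w = x.coeff (u * w) := rfl

lemma Dop_zero {n : ℕ} (u : FreeMonoid (Fin n)) : Dop u (0 : NCPoly n) = 0 := by
  ext w; simp [Dop_apply]

lemma Dop_smul {n : ℕ} (u : FreeMonoid (Fin n)) (c : ℂ) (x : NCPoly n) :
    Dop u (c • x) = c • Dop u x := by
  ext w
  rw [Dop_apply, MonoidAlgebra.coeff_smul_apply, MonoidAlgebra.coeff_smul_apply, Dop_apply]

lemma Dop_sum {n : ℕ} {ι : Type*} (s : Finset ι) (F : ι → NCPoly n) (u : FreeMonoid (Fin n)) :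
    Dop u (∑ i ∈ s, F i) = ∑ i ∈ s, Dop u (F i) := by
  ext w
  rw [Dop_apply, MonoidAlgebra.coeff_sum, Finsupp.finset_sum_apply, MonoidAlgebra.coeff_sum,
    Finsupp.finset_sum_apply]
  simp only [Dop_apply]

lemma Dop_Dop {n : ℕ} (u v : FreeMonoid (Fin n)) (x : NCPoly n) :
    Dop v (Dop u x) = Dop (u * v) x := by
  ext w; simp [Dop_apply, mul_assoc]

lemma Dop_single_cat {n : ℕ} (u w : List (Fin n)) (c : ℂ) :
    Dop (FreeMonoid.ofList u) (MonoidAlgebra.single (FreeMonoid.ofList (u ++ w)) c)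
      = MonoidAlgebra.single (FreeMonoid.ofList w) c := by
  ext v
  rw [Dop_apply, FreeMonoid.ofList_append]
  classical
  rw [MonoidAlgebra.coeff_single, MonoidAlgebra.coeff_single, Finsupp.single_apply,
    Finsupp.single_apply,
    mul_right_inj]

lemma Dop_single_zero {n : ℕ} (u v : List (Fin n)) (c : ℂ)
    (h : ∀ w : List (Fin n), u ++ w ≠ v) :
    Dop (FreeMonoid.ofList u) (MonoidAlgebra.single (FreeMonoid.ofList v) c) = 0 := by
  ext w
  rw [Dop_apply]
  have hne : FreeMonoid.ofList v ≠ FreeMonoid.ofList u * w := fun hh =>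
    h w.toList (FreeMonoid.ofList.injective hh.symm)
  classical
  rw [MonoidAlgebra.coeff_single, Finsupp.single_apply, if_neg hne, MonoidAlgebra.coeff_zero,
    Finsupp.coe_zero, Pi.zero_apply]

lemma ofFn_split {α : Type*} {d l k m : ℕ} (h : d = l + k + m) (g : Fin d → α) :
    List.ofFn g = List.ofFn (fun i : Fin l => g ⟨i.1, by have := i.isLt; omega⟩) ++
      (List.ofFn (fun i : Fin k => g ⟨l + i.1, by have := i.isLt; omega⟩) ++
       List.ofFn (fun i : Fin m => g ⟨l + k + i.1, by have := i.isLt; omega⟩)) := by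
  apply List.ext_getElem
  · simp; omega
  · intro i h1 h2
    simp only [List.getElem_ofFn, List.getElem_append, List.length_ofFn]
    split_ifs <;>
      first
        | rfl
        | (congr 1; apply Fin.ext; simp only [Fin.val_mk]; omega)

lemma MsymOp_zero (n k : ℕ) (r : Setoid (Fin k)) : MsymOp n k r 0 = 0 := by
  unfold MsymOp
  apply Finset.sum_eq_zero
  intro f _
  split_ifs <;> simp [Dop_zero]

lemma MsymOp_smul (n k : ℕ) (r : Setoid (Fin k)) (c : ℂ) (x : NCPoly n) :
    MsymOp n k r (c • x) = c • MsymOp n k r x := by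
  unfold MsymOp
  rw [Finset.smul_sum]
  apply Finset.sum_congr rfl
  intro f _
  split_ifs <;> simp [Dop_smul]

lemma MsymOp_sum (n k : ℕ) (r : Setoid (Fin k)) {ι : Type*} (s : Finset ι)
    (F : ι → NCPoly n) :
    MsymOp n k r (∑ i ∈ s, F i) = ∑ i ∈ s, MsymOp n k r (F i) := by
  unfold MsymOp
  rw [Finset.sum_comm]
  apply Finset.sum_congr rfl
  intro f _
  split_ifs with h
  · exact Dop_sum s F _
  · exact (Finset.sum_const_zero).symm

open Classical in
lemma MsymOp_key {n k l m : ℕ} (r : Setoid (Fin k)) (a g₁ : Fin l → Fin n)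
    (g₂ : Fin k → Fin n) (g₃ : Fin m → Fin n) (σ : Equiv.Perm (Fin n)) :
    MsymOp n k r (Dop (FreeMonoid.ofList (List.ofFn a))
      (MonoidAlgebra.single (FreeMonoid.ofList
        (List.ofFn (fun i => σ (g₁ i)) ++
          (List.ofFn (fun i => σ (g₂ i)) ++ List.ofFn (fun i => σ (g₃ i))))) (1 : ℂ)))
    = if (∀ i, σ (g₁ i) = a i) ∧ (∀ i j, g₂ i = g₂ j ↔ r.r i j)
      then MonoidAlgebra.single (FreeMonoid.ofList (List.ofFn (fun i => σ (g₃ i)))) (1 : ℂ)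
      else 0 := by
  by_cases h1 : ∀ i, σ (g₁ i) = a i
  · have e1 : List.ofFn (fun i => σ (g₁ i)) = List.ofFn a := by
      congr 1
      funext i
      exact h1 i
    rw [e1, Dop_single_cat]
    unfold MsymOp
    rw [Fintype.sum_eq_single (fun i => σ (g₂ i)) (fun f hf => ?_)]
    · rw [Dop_single_cat]
      by_cases hp : ∀ i j, g₂ i = g₂ j ↔ r.r i j
      · rw [if_pos fun i j => by rw [Equiv.apply_eq_iff_eq]; exact hp i j,
          if_pos ⟨h1, hp⟩]
      · rw [if_neg fun hc => hp fun i j => by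
            rw [← Equiv.apply_eq_iff_eq σ]; exact hc i j,
          if_neg fun hc => hp hc.2]
    · split_ifs with hc
      · apply Dop_single_zero
        intro w hw
        exact hf (List.ofFn_injective (List.append_inj_left hw (by simp)))
      · rfl
  · have hz : Dop (FreeMonoid.ofList (List.ofFn a))
        (MonoidAlgebra.single (FreeMonoid.ofList
          (List.ofFn (fun i => σ (g₁ i)) ++
            (List.ofFn (fun i => σ (g₂ i)) ++ List.ofFn (fun i => σ (g₃ i))))) (1 : ℂ)) = 0 := by
      apply Dop_single_zero
      intro w hw
      have := List.ofFn_injective (List.append_inj_left hw (by simp))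
      exact h1 fun i => (congrFun this i).symm
    rw [hz, MsymOp_zero, if_neg fun hc => h1 hc.1]

end Helpers

/-- For a set partition `Ψ ⊢ [k]`, a generalized set composition
`A ⊨ [ℓ]` and an ordered generalized set composition `Φ ⊨ [d]` with at most one empty
part, the element `M⃖_Ψ(d)·d_{A⃖}·𝒜_Φ` is `0` or `±𝒜_{Θ^ε}` for some two-colored
generalized set composition `Θ^ε`. -/
theorem MsymOp_deriv_AltSum (n k ℓ d : ℕ) (r : Setoid (Fin k))
    (a : Fin ℓ → Fin n) (g : Fin d → Fin n) (hg : OrderedGSC g) :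
    MsymOp n k r (Dop (FreeMonoid.ofList (List.ofFn a)) (AltSum n d g)) = 0 ∨
      ∃ (m : ℕ) (h : Fin m → Fin n) (T : Finset (Fin n)) (s : ℤˣ),
        MsymOp n k r (Dop (FreeMonoid.ofList (List.ofFn a)) (AltSum n d g)) =
          ((s : ℤ) : ℂ) • AltSumTC n m h T := by
  classical
  have hexp : MsymOp n k r (Dop (FreeMonoid.ofList (List.ofFn a)) (AltSum n d g))
      = ∑ σ : Equiv.Perm (Fin n), ((Equiv.Perm.sign σ : ℤ) : ℂ) •
          MsymOp n k r (Dop (FreeMonoid.ofList (List.ofFn a))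
            (MonoidAlgebra.single (FreeMonoid.ofList (List.ofFn fun i => σ (g i))) (1 : ℂ))) := by
    rw [AltSum, Dop_sum, MsymOp_sum]
    exact Finset.sum_congr rfl fun σ _ => by rw [Dop_smul, MsymOp_smul]
  by_cases hd : ℓ + k ≤ d
  · obtain ⟨m, hdm⟩ : ∃ m, d = ℓ + k + m := ⟨d - (ℓ + k), by omega⟩
    obtain ⟨g₁, g₂, g₃, h0⟩ : ∃ (g₁ : Fin ℓ → Fin n) (g₂ : Fin k → Fin n) (g₃ : Fin m → Fin n),
        List.ofFn g = List.ofFn g₁ ++ (List.ofFn g₂ ++ List.ofFn g₃) :=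
      ⟨_, _, _, ofFn_split hdm g⟩
    have h1 : ∀ σ : Equiv.Perm (Fin n), (List.ofFn fun i => σ (g i)) =
        List.ofFn (fun i => σ (g₁ i)) ++
          (List.ofFn (fun i => σ (g₂ i)) ++ List.ofFn (fun i => σ (g₃ i))) := by
      intro σ
      have := congrArg (List.map σ) h0
      simpa [List.map_ofFn, Function.comp_def] using this
    have hsum : MsymOp n k r (Dop (FreeMonoid.ofList (List.ofFn a)) (AltSum n d g))
        = ∑ σ : Equiv.Perm (Fin n), ((Equiv.Perm.sign σ : ℤ) : ℂ) •
            (if (∀ i, σ (g₁ i) = a i) ∧ (∀ i j, g₂ i = g₂ j ↔ r.r i j)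
             then MonoidAlgebra.single
               (FreeMonoid.ofList (List.ofFn (fun i => σ (g₃ i)))) (1 : ℂ)
             else 0) :=
      hexp.trans (Finset.sum_congr rfl fun σ _ => by
        rw [h1 σ, MsymOp_key r a g₁ g₂ g₃ σ])
    by_cases hp : ∀ i j, g₂ i = g₂ j ↔ r.r i j
    · by_cases hex : ∃ σ₀ : Equiv.Perm (Fin n), ∀ i, σ₀ (g₁ i) = a i
      · obtain ⟨σ₀, hσ₀⟩ := hex
        right
        refine ⟨m, fun i => σ₀ (g₃ i),
          (Finset.image (fun i => σ₀ (g₁ i)) Finset.univ)ᶜ, Equiv.Perm.sign σ₀, ?_⟩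
        rw [hsum]
        unfold AltSumTC
        rw [Finset.sum_filter, Finset.smul_sum]
        refine Fintype.sum_equiv (Equiv.mulRight σ₀⁻¹) _ _ fun x => ?_
        simp only [Equiv.coe_mulRight, Equiv.Perm.mul_apply, Equiv.Perm.inv_apply_self]
        have hcond : (∀ i, x (g₁ i) = a i) ↔
            (∀ i ∉ (Finset.image (fun i => σ₀ (g₁ i)) Finset.univ)ᶜ, x (σ₀⁻¹ i) = i) := by
          constructor
          · intro h i hi
            rw [Finset.mem_compl, not_not] at hi
            obtain ⟨j, -, rfl⟩ := Finset.mem_image.mp hi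
            rw [Equiv.Perm.inv_apply_self, h j, hσ₀ j]
          · intro h i
            have hmem : σ₀ (g₁ i) ∉ (Finset.image (fun i => σ₀ (g₁ i)) Finset.univ)ᶜ := by
              rw [Finset.mem_compl, not_not]
              exact Finset.mem_image.mpr ⟨i, Finset.mem_univ i, rfl⟩
            have h2 := h _ hmem
            rw [Equiv.Perm.inv_apply_self] at h2
            rw [h2]
            exact hσ₀ i
        have hsu : Equiv.Perm.sign σ₀ * Equiv.Perm.sign (x * σ₀⁻¹) = Equiv.Perm.sign x := by
          rw [map_mul, map_inv, mul_comm (Equiv.Perm.sign x), mul_inv_cancel_left]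
        by_cases hC : ∀ i, x (g₁ i) = a i
        · rw [if_pos ⟨hC, hp⟩, if_pos (hcond.mp hC), smul_smul, ← Int.cast_mul,
            ← Units.val_mul, hsu]
        · rw [if_neg fun hc => hC hc.1, if_neg fun hc => hC (hcond.mpr hc),
            smul_zero, smul_zero]
      · left
        rw [hsum]
        apply Finset.sum_eq_zero
        intro σ _
        rw [if_neg fun hc => hex ⟨σ, hc.1⟩, smul_zero]
    · left
      rw [hsum]
      apply Finset.sum_eq_zero
      intro σ _
      rw [if_neg fun hc => hp hc.2, smul_zero]
  · left
    rw [hexp]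
    apply Finset.sum_eq_zero
    intro σ _
    have hz : MsymOp n k r (Dop (FreeMonoid.ofList (List.ofFn a))
        (MonoidAlgebra.single (FreeMonoid.ofList (List.ofFn fun i => σ (g i))) (1 : ℂ))) = 0 := by
      unfold MsymOp
      apply Finset.sum_eq_zero
      intro f _
      split_ifs with hf
      · rw [Dop_Dop, ← FreeMonoid.ofList_append]
        apply Dop_single_zero
        intro w hw
        have := congrArg List.length hw
        simp at this
        omega
      · rfl
    rw [hz, smul_zero]
end

section
/- In ℂ⟨x₁,x₂⟩, the ideal I₂ generated by the noncommutative symmetric functions M_Φ(x₁,x₂) (Φ nonempty set partitions) contains every homogeneous element of degree ≥ 2; equivalently I₂ together with the span of {1, x₁ − x₂, x₁ + x₂} exhausts ℂ⟨x₁,x₂⟩, and the quotient ℂ⟨x₁,x₂⟩/I₂ has dimension 2. -/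
open scoped BigOperators

open Classical in
/-- The monomial symmetric function in noncommuting variables `M_Φ(x₁,…,xₙ)`, where the
set partition `Φ` of `[k]` is encoded as an equivalence relation (a `Setoid`) on `Fin k`:
the sum of all words `w` of length `k` whose fibres give the set partition `Φ`, i.e.
`w_i = w_j ↔ i ∼ j`. -/
noncomputable def Msym (n k : ℕ) (r : Setoid (Fin k)) : NCPoly n :=
  ∑ f : Fin k → Fin n,
    if (∀ i j, f i = f j ↔ r.r i j)
    then MonoidAlgebra.single (FreeMonoid.ofList (List.ofFn f)) (1 : ℂ)
    else 0

/-- The two-sided ideal generated by the `M_Φ(x₁,…,xₙ)` over all nonempty set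
partitions `Φ ⊢ [k]`, `k > 0`. -/
noncomputable def Isym (n : ℕ) : TwoSidedIdeal (NCPoly n) :=
  TwoSidedIdeal.span {x | ∃ k : ℕ, 0 < k ∧ ∃ r : Setoid (Fin k), x = Msym n k r}

/-- The noncommutative harmonics `Har_n = I_n^⊥`. -/
noncomputable def HarSet (n : ℕ) : Set (NCPoly n) :=
  {P | ∀ f ∈ Isym n, wpair f P = 0}


section IsymTwoAux

noncomputable abbrev W (l : List (Fin 2)) : NCPoly 2 :=
  MonoidAlgebra.single (FreeMonoid.ofList l) 1

lemma Msym_one (r : Setoid (Fin 1)) : Msym 2 1 r = W [0] + W [1] := by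
  rw [Msym]
  rw [← (Equiv.funUnique (Fin 1) (Fin 2)).symm.sum_comp]
  have h : ∀ f : Fin 1 → Fin 2, (∀ i j, f i = f j ↔ r.r i j) := by
    intro f i j
    rw [Subsingleton.elim i j]
    simpa using r.refl' j
  simp only [if_pos (h _)]
  rw [Fin.sum_univ_two]
  congr 1

lemma Msym_two_top : Msym 2 2 ⊤ = W [0,0] + W [1,1] := by
  rw [Msym]
  rw [← (piFinTwoEquiv fun _ => Fin 2).symm.sum_comp]
  rw [Fintype.sum_prod_type]
  simp only [Fin.sum_univ_two, piFinTwoEquiv_symm_apply]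
  have ht : ∀ i j : Fin 2, (⊤ : Setoid (Fin 2)).r i j ↔ True := fun _ _ => Iff.rfl
  simp only [ht, iff_true, Fin.forall_fin_two, Fin.cons_zero, Fin.cons_one]
  norm_num [List.ofFn_succ]
  abel

lemma Msym_two_bot : Msym 2 2 ⊥ = W [0,1] + W [1,0] := by
  rw [Msym]
  rw [← (piFinTwoEquiv fun _ => Fin 2).symm.sum_comp]
  rw [Fintype.sum_prod_type]
  simp only [Fin.sum_univ_two, piFinTwoEquiv_symm_apply]
  have hb : ∀ i j : Fin 2, (⊥ : Setoid (Fin 2)).r i j ↔ i = j := fun _ _ => Iff.rfl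
  simp only [hb, Fin.forall_fin_two, Fin.cons_zero, Fin.cons_one]
  norm_num [List.ofFn_succ]
  abel



lemma Isym_smul {c : ℂ} {x : NCPoly 2} (hx : x ∈ Isym 2) : c • x ∈ Isym 2 := by
  rw [Algebra.smul_def]
  exact TwoSidedIdeal.mul_mem_left _ _ _ hx

lemma mem_S : W [0] + W [1] ∈ Isym 2 :=
  TwoSidedIdeal.subset_span ⟨1, one_pos, ⊤, (Msym_one ⊤).symm⟩

lemma mem_top2 : W [0,0] + W [1,1] ∈ Isym 2 :=
  TwoSidedIdeal.subset_span ⟨2, two_pos, ⊤, Msym_two_top.symm⟩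

lemma mem_bot2 : W [0,1] + W [1,0] ∈ Isym 2 :=
  TwoSidedIdeal.subset_span ⟨2, two_pos, ⊥, Msym_two_bot.symm⟩

lemma W_mul_W (l l' : List (Fin 2)) : W l * W l' = W (l ++ l') := by
  rw [MonoidAlgebra.single_mul_single, one_mul]; rfl

lemma mem_00 : W [0,0] ∈ Isym 2 := by
  have h1 : W [0,0] + W [0,1] ∈ Isym 2 := by
    have := TwoSidedIdeal.mul_mem_left _ (W [0]) _ mem_S
    rwa [mul_add, W_mul_W, W_mul_W] at this
  have h2 : W [0,0] + W [1,0] ∈ Isym 2 := by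
    have := TwoSidedIdeal.mul_mem_right _ _ (W [0]) mem_S
    rwa [add_mul, W_mul_W, W_mul_W] at this
  have h4 := Isym_smul (c := (2:ℂ)⁻¹)
    (TwoSidedIdeal.sub_mem _ (TwoSidedIdeal.add_mem _ h1 h2) mem_bot2)
  have heq : ((2:ℂ)⁻¹ : ℂ) • (W [0,0] + W [0,1] + (W [0,0] + W [1,0]) - (W [0,1] + W [1,0]))
      = W [0,0] := by module
  rwa [heq] at h4

lemma mem_len2 (a b : Fin 2) : W [a, b] ∈ Isym 2 := by
  have h1 : W [0,0] + W [0,1] ∈ Isym 2 := by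
    have := TwoSidedIdeal.mul_mem_left _ (W [0]) _ mem_S
    rwa [mul_add, W_mul_W, W_mul_W] at this
  have h2 : W [0,0] + W [1,0] ∈ Isym 2 := by
    have := TwoSidedIdeal.mul_mem_right _ _ (W [0]) mem_S
    rwa [add_mul, W_mul_W, W_mul_W] at this
  have h01 : W [0,1] ∈ Isym 2 := by
    have := TwoSidedIdeal.sub_mem _ h1 mem_00; rwa [add_sub_cancel_left] at this
  have h10 : W [1,0] ∈ Isym 2 := by
    have := TwoSidedIdeal.sub_mem _ h2 mem_00; rwa [add_sub_cancel_left] at this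
  have h11 : W [1,1] ∈ Isym 2 := by
    have := TwoSidedIdeal.sub_mem _ mem_top2 mem_00; rwa [add_sub_cancel_left] at this
  match a, b with
  | 0, 0 => exact mem_00
  | 0, 1 => exact h01
  | 1, 0 => exact h10
  | 1, 1 => exact h11

lemma word_mem (l : List (Fin 2)) (h : 2 ≤ l.length) (c : ℂ) :
    MonoidAlgebra.single (FreeMonoid.ofList l) c ∈ Isym 2 := by
  match l with
  | a :: b :: t =>
      have : MonoidAlgebra.single (FreeMonoid.ofList (a :: b :: t)) c
          = W [a, b] * MonoidAlgebra.single (FreeMonoid.ofList t) c := by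
        rw [MonoidAlgebra.single_mul_single, one_mul]; rfl
      rw [this]
      exact TwoSidedIdeal.mul_mem_right _ _ _ (mem_len2 a b)

lemma tail_mem (f : NCPoly 2) (h : ∀ w ∈ f.coeff.support, 2 ≤ FreeMonoid.length w) :
    f ∈ Isym 2 := by
  have hf : f = ∑ w ∈ f.coeff.support, MonoidAlgebra.single w (f.coeff w) := by
    exact (MonoidAlgebra.sum_coeff_single f).symm
  rw [hf]
  refine Finset.sum_induction _ (· ∈ Isym 2) (fun a b ha hb => TwoSidedIdeal.add_mem _ ha hb)
    (TwoSidedIdeal.zero_mem _) ?_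
  intro w hw
  exact word_mem (FreeMonoid.toList w) (h w hw) (f.coeff w)

lemma free_ne (l l' : List (Fin 2)) (h : l ≠ l') :
    FreeMonoid.ofList l ≠ FreeMonoid.ofList l' := fun hh => h (by
  simpa using congrArg FreeMonoid.toList hh)

lemma decomp (f : NCPoly 2) :
    ∃ g ∈ Isym 2, ∃ c₀ c₁ c₂ : ℂ,
      f = g + c₀ • (1 : NCPoly 2) + c₁ • (W [0] - W [1]) + c₂ • (W [0] + W [1]) := by
  classical
  set a := f.coeff (FreeMonoid.ofList [0]) with ha
  set b := f.coeff (FreeMonoid.ofList [1]) with hb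
  set c₀ := f.coeff (1 : FreeMonoid (Fin 2)) with hc0
  set g := f - c₀ • (1 : NCPoly 2) - a • W [0] - b • W [1] with hg
  have gapp : ∀ w, g.coeff w = f.coeff w - c₀ * (MonoidAlgebra.single (1 : FreeMonoid (Fin 2)) (1:ℂ)).coeff w
      - a * (W [0]).coeff w - b * (W [1]).coeff w := by
    intro w
    rw [hg, MonoidAlgebra.one_def]
    simp only [MonoidAlgebra.coeff_sub, MonoidAlgebra.coeff_smul, Finsupp.sub_apply,
      Finsupp.smul_apply, smul_eq_mul]
  have hone : (1 : FreeMonoid (Fin 2)) = FreeMonoid.ofList [] := rfl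
  have hgmem : g ∈ Isym 2 := by
    apply tail_mem
    intro w hw
    by_contra hlen
    push_neg at hlen
    have hgw : g.coeff w = 0 := by
      rw [gapp w]
      simp only [W, MonoidAlgebra.coeff_single]
      rw [Finsupp.single_apply, Finsupp.single_apply, Finsupp.single_apply]
      interval_cases hl : FreeMonoid.length w
      · have hw1 : w = 1 := by
          have h0 : FreeMonoid.toList w = [] := List.length_eq_zero_iff.mp hl
          exact h0
        subst hw1
        rw [if_pos rfl, if_neg (Ne.symm (hone ▸ free_ne _ _ (by decide))),
          if_neg (Ne.symm (hone ▸ free_ne _ _ (by decide)))]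
        rw [hc0]; ring
      · obtain ⟨x, hx⟩ : ∃ x, FreeMonoid.toList w = [x] := List.length_eq_one_iff.mp hl
        have hwx : w = FreeMonoid.ofList [x] := hx
        subst hwx
        have hx2 : x = 0 ∨ x = 1 := by omega
        rcases hx2 with rfl | rfl
        · rw [if_neg (hone ▸ free_ne _ _ (by decide)), if_pos rfl,
            if_neg (free_ne _ _ (by decide))]
          rw [ha]; ring
        · rw [if_neg (hone ▸ free_ne _ _ (by decide)), if_neg (free_ne _ _ (by decide)),
            if_pos rfl]
          rw [hb]; ring
    exact (Finsupp.mem_support_iff.mp hw) hgw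
  refine ⟨g, hgmem, c₀, (a - b) / 2, (a + b) / 2, ?_⟩
  rw [hg]
  module

open DualNumber in
noncomputable def phi : NCPoly 2 →ₐ[ℂ] DualNumber ℂ :=
  MonoidAlgebra.lift ℂ (DualNumber ℂ) (FreeMonoid (Fin 2))
    (FreeMonoid.lift ![ε, -ε])

open DualNumber in
lemma phi_word (l : List (Fin 2)) :
    phi (MonoidAlgebra.single (FreeMonoid.ofList l) (1:ℂ))
      = (List.map (![ε, -ε] : Fin 2 → DualNumber ℂ) l).prod := by
  rw [phi, MonoidAlgebra.lift_single, FreeMonoid.lift_apply, one_smul]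
  rfl

open DualNumber in
lemma eps_sq (i j : Fin 2) : (![ε, -ε] : Fin 2 → DualNumber ℂ) i * ![ε, -ε] j = 0 := by
  have h2 : i = 0 ∨ i = 1 := by omega
  have h3 : j = 0 ∨ j = 1 := by omega
  rcases h2 with rfl | rfl <;> rcases h3 with rfl | rfl <;>
    simp [mul_neg, neg_mul, eps_mul_eps]

lemma phi_word_len2 (l : List (Fin 2)) (h : 2 ≤ l.length) :
    phi (MonoidAlgebra.single (FreeMonoid.ofList l) (1:ℂ)) = 0 := by
  match l with
  | a :: b :: t =>
    rw [phi_word]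
    rw [List.map_cons, List.map_cons, List.prod_cons, List.prod_cons, ← mul_assoc,
      eps_sq, zero_mul]

open DualNumber in
lemma phi_Msym (k : ℕ) (hk : 0 < k) (r : Setoid (Fin k)) : phi (Msym 2 k r) = 0 := by
  rcases Nat.lt_or_ge k 2 with hk2 | hk2
  · interval_cases k
    rw [Msym_one r, map_add, phi_word, phi_word]
    simp
  · rw [Msym, map_sum]
    apply Finset.sum_eq_zero
    intro f _
    split
    · apply phi_word_len2
      simpa using hk2
    · exact map_zero _

lemma phi_Isym {x : NCPoly 2} (hx : x ∈ Isym 2) : phi x = 0 := by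
  rw [← TwoSidedIdeal.mem_ker (phi : NCPoly 2 →ₐ[ℂ] DualNumber ℂ)]
  refine TwoSidedIdeal.mem_span_iff.mp hx _ ?_
  rintro y ⟨k, hk, r, rfl⟩
  exact SetLike.mem_coe.mpr ((TwoSidedIdeal.mem_ker phi).mpr (phi_Msym k hk r))

lemma span_le_ker :
    Submodule.span ℂ ((Isym 2 : Set (NCPoly 2))) ≤ LinearMap.ker phi.toLinearMap := by
  rw [Submodule.span_le]
  intro x hx
  simpa [LinearMap.mem_ker] using phi_Isym hx

noncomputable abbrev Ssub : Submodule ℂ (NCPoly 2) :=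
  Submodule.span ℂ ((Isym 2 : Set (NCPoly 2)))

noncomputable abbrev Qmk : NCPoly 2 →ₗ[ℂ] (NCPoly 2 ⧸ Ssub) := Ssub.mkQ

open DualNumber in
lemma indep : LinearIndependent ℂ ![Qmk 1, Qmk (W [0])] := by
  rw [LinearIndependent.pair_iff]
  intro s t hst
  have h0 : Qmk (s • (1 : NCPoly 2) + t • W [0]) = 0 := by
    rw [map_add, map_smul, map_smul]; exact hst
  have hmem : s • (1 : NCPoly 2) + t • W [0] ∈ Ssub := by
    rwa [← Submodule.Quotient.mk_eq_zero]
  have hphi : phi (s • (1 : NCPoly 2) + t • W [0]) = 0 := by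
    have := span_le_ker hmem
    simpa [LinearMap.mem_ker] using this
  rw [map_add, map_smul, map_smul, map_one] at hphi
  have hW0 : phi (W [0]) = ε := by
    rw [phi_word]; simp
  rw [hW0] at hphi
  constructor
  · have := congrArg TrivSqZeroExt.fst hphi
    simpa using this
  · have := congrArg TrivSqZeroExt.snd hphi
    simpa using this

lemma spans : ⊤ ≤ Submodule.span ℂ (Set.range ![Qmk 1, Qmk (W [0])]) := by
  rintro q -
  obtain ⟨f, rfl⟩ := Ssub.mkQ_surjective q
  obtain ⟨g, hg, c₀, c₁, c₂, rfl⟩ := decomp f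
  have hgz : Qmk g = 0 := (Submodule.Quotient.mk_eq_zero _).mpr (Submodule.subset_span hg)
  have hsz : Qmk (W [0] + W [1]) = 0 :=
    (Submodule.Quotient.mk_eq_zero _).mpr (Submodule.subset_span mem_S)
  have h1 : Qmk 1 ∈ Submodule.span ℂ (Set.range ![Qmk 1, Qmk (W [0])]) :=
    Submodule.subset_span ⟨0, rfl⟩
  have h2 : Qmk (W [0]) ∈ Submodule.span ℂ (Set.range ![Qmk 1, Qmk (W [0])]) :=
    Submodule.subset_span ⟨1, rfl⟩
  have key : Qmk (g + c₀ • 1 + c₁ • (W [0] - W [1]) + c₂ • (W [0] + W [1]))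
      = c₀ • Qmk 1 + (2 * c₁) • Qmk (W [0]) + (c₂ - c₁) • Qmk (W [0] + W [1]) := by
    simp only [map_add, map_smul, map_sub, hgz]
    module
  rw [key, hsz, smul_zero, add_zero]
  exact Submodule.add_mem _ (Submodule.smul_mem _ _ h1) (Submodule.smul_mem _ _ h2)

lemma rank2 : Module.finrank ℂ (NCPoly 2 ⧸ Ssub) = 2 := by
  let b : Module.Basis (Fin 2) ℂ (NCPoly 2 ⧸ Ssub) := Module.Basis.mk indep spans
  rw [Module.finrank_eq_card_basis b]
  simp

end IsymTwoAux


/-- The ideal `I₂ ⊆ ℂ⟨x₁,x₂⟩` generated by the `M_Φ(x₁,x₂)` contains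
every homogeneous element of degree `≥ 2`; together with the span of
`{1, x₁ − x₂, x₁ + x₂}` it exhausts `ℂ⟨x₁,x₂⟩`; and the quotient `ℂ⟨x₁,x₂⟩/I₂` has
dimension `2` as a `ℂ`-vector space. -/

theorem Isym_two :
    (∀ (f : NCPoly 2) (d : ℕ), 2 ≤ d →
        (∀ w ∈ f.coeff.support, FreeMonoid.length w = d) → f ∈ Isym 2) ∧
    (∀ f : NCPoly 2, ∃ g ∈ Isym 2, ∃ c₀ c₁ c₂ : ℂ,
        f = g + c₀ • (1 : NCPoly 2) +
          c₁ • (MonoidAlgebra.single (FreeMonoid.ofList [(0 : Fin 2)]) (1 : ℂ) -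
                MonoidAlgebra.single (FreeMonoid.ofList [(1 : Fin 2)]) (1 : ℂ)) +
          c₂ • (MonoidAlgebra.single (FreeMonoid.ofList [(0 : Fin 2)]) (1 : ℂ) +
                MonoidAlgebra.single (FreeMonoid.ofList [(1 : Fin 2)]) (1 : ℂ))) ∧
    Module.finrank ℂ
      (NCPoly 2 ⧸ Submodule.span ℂ ((Isym 2 : Set (NCPoly 2)))) = 2 := by

    refine ⟨?_, ?_, ?_⟩
    · intro f d hd hf
      exact tail_mem f fun w hw => (hf w hw) ▸ hd
    · intro f
      exact decomp f
    · exact rank2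
end
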